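/- arXiv:1109.4879 — 6 statements merged into one kernel-verified Lean document; each statement's English description precedes it below -/
import Mathlib

section
/- For any nonnegative integers n and k, ν(Σ_{i ≥ 0} C(n, 2i+1)·i^k) ≥ n − k − α(n); equivalently, 2^{max(0, n−k−α(n))} divides Σ_{i ≥ 0} C(n, 2i+1)·i^k. -/
/-- `alpha n` is the number of 1's in the binary expansion of `n`. -/
def alpha (n : ℕ) : ℕ := (Nat.digits 2 n).sum

/-- `Σ_{i ≥ 0} C(n, 2i+1)·i^k` (a finite sum of natural numbers). -/
def oddSum (n k : ℕ) : ℕ := ∑ i ∈ Finset.range (n + 1), Nat.choose n (2 * i + 1) * i ^ k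

open Finset

/-- Newton forward-difference coefficients of `(x-1)^k` in the binomial basis. -/
def bcoef : ℕ → ℕ → ℤ
  | 0, j => if j = 0 then 1 else 0
  | k+1, j => ((j : ℤ) - 1) * bcoef k j + (j : ℤ) * bcoef k (j - 1)

lemma bcoef_eq_zero : ∀ k j, k < j → bcoef k j = 0
  | 0, j, h => by
    have : j ≠ 0 := by omega
    simp [bcoef, this]
  | k+1, j, h => by
    have h1 : k < j := by omega
    have h2 : k < j - 1 := by omega
    simp [bcoef, bcoef_eq_zero k j h1, bcoef_eq_zero k (j-1) h2]

lemma x_mul_choose (x j : ℕ) :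
    (x : ℤ) * (x.choose j : ℤ)
      = ((j : ℤ) + 1) * (x.choose (j+1) : ℤ) + (j : ℤ) * (x.choose j : ℤ) := by
  rcases le_or_gt j x with h | h
  · have hkey := Nat.choose_succ_right_eq x j
    have hcast : ((x - j : ℕ) : ℤ) = (x : ℤ) - j := by
      omega
    have : (x.choose (j+1) : ℤ) * ((j : ℤ) + 1) = (x.choose j : ℤ) * ((x : ℤ) - j) := by
      rw [← hcast]
      exact_mod_cast congrArg (Nat.cast : ℕ → ℤ) hkey
    linarith [this]
  · have h1 : x.choose j = 0 := Nat.choose_eq_zero_of_lt h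
    have h2 : x.choose (j+1) = 0 := Nat.choose_eq_zero_of_lt (by omega)
    simp [h1, h2]

lemma bcoef_newton (k x : ℕ) :
    ((x : ℤ) - 1) ^ k = ∑ j ∈ range (k+1), bcoef k j * (x.choose j : ℤ) := by
  induction k with
  | zero => simp [bcoef]
  | succ k ih =>
    have step : ((x : ℤ) - 1) ^ (k+1)
        = ∑ j ∈ range (k+1), bcoef k j * (((x : ℤ) - 1) * (x.choose j : ℤ)) := by
      rw [pow_succ, ih, sum_mul]
      apply sum_congr rfl
      intro j _
      ring
    rw [step]
    have expand : ∀ j ∈ range (k+1),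
        bcoef k j * (((x : ℤ) - 1) * (x.choose j : ℤ))
          = bcoef k j * (((j : ℤ) + 1) * (x.choose (j+1) : ℤ))
            + bcoef k j * (((j : ℤ) - 1) * (x.choose j : ℤ)) := by
      intro j _
      have := x_mul_choose x j
      have h2 : ((x:ℤ) - 1) * (x.choose j : ℤ)
          = ((j:ℤ)+1) * (x.choose (j+1) : ℤ) + ((j:ℤ)-1) * (x.choose j : ℤ) := by
        linear_combination this
      rw [h2]; ring
    rw [sum_congr rfl expand, sum_add_distrib]
    -- RHS : ∑ j in range (k+2), bcoef (k+1) j * choose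
    have rhs : ∑ j ∈ range (k+2), bcoef (k+1) j * (x.choose j : ℤ)
        = ∑ j ∈ range (k+2), ((j : ℤ) - 1) * bcoef k j * (x.choose j : ℤ)
          + ∑ j ∈ range (k+2), (j : ℤ) * bcoef k (j-1) * (x.choose j : ℤ) := by
      rw [← sum_add_distrib]
      apply sum_congr rfl
      intro j _
      show (((j : ℤ) - 1) * bcoef k j + (j : ℤ) * bcoef k (j - 1)) * _ = _
      ring
    have h2 : ∑ j ∈ range (k+2), ((j : ℤ) - 1) * bcoef k j * (x.choose j : ℤ)
        = ∑ j ∈ range (k+1), ((j : ℤ) - 1) * bcoef k j * (x.choose j : ℤ) := by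
      rw [sum_range_succ, bcoef_eq_zero k (k+1) (by omega)]
      ring
    have h3 : ∑ j ∈ range (k+2), (j : ℤ) * bcoef k (j-1) * (x.choose j : ℤ)
        = ∑ j ∈ range (k+1), ((j : ℤ) + 1) * bcoef k j * (x.choose (j+1) : ℤ) := by
      rw [Finset.sum_range_succ' (fun j => (j : ℤ) * bcoef k (j-1) * (x.choose j : ℤ)) (k+1)]
      simp only [Nat.cast_zero, zero_mul, add_zero, Nat.add_sub_cancel]
      apply sum_congr rfl
      intro j _
      push_cast
      ring
    rw [rhs, h2, h3, ← sum_add_distrib, ← sum_add_distrib]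
    apply sum_congr rfl
    intro j _
    ring

lemma bcoef_dvd (k j : ℕ) : (2 : ℤ) ^ (padicValNat 2 (Nat.factorial j)) ∣ bcoef k j := by
  haveI : Fact (Nat.Prime 2) := ⟨Nat.prime_two⟩
  induction k generalizing j with
  | zero =>
    rcases Nat.eq_zero_or_pos j with rfl | hj
    · simp [bcoef]
    · have : j ≠ 0 := by omega
      simp [bcoef, this]
  | succ k ih =>
    show (2:ℤ)^_ ∣ ((j : ℤ) - 1) * bcoef k j + (j : ℤ) * bcoef k (j - 1)
    refine dvd_add (Dvd.dvd.mul_left (ih j) _) ?_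
    rcases Nat.eq_zero_or_pos j with rfl | hj
    · simp
    · have hfac : Nat.factorial j = j * Nat.factorial (j - 1) := by
        cases j with
        | zero => omega
        | succ m => simp [Nat.factorial_succ]
      have hval : padicValNat 2 (Nat.factorial j)
          = padicValNat 2 j + padicValNat 2 (Nat.factorial (j-1)) := by
        rw [hfac, padicValNat.mul (by omega) (Nat.factorial_ne_zero _)]
      rw [hval, pow_add]
      exact mul_dvd_mul (by exact_mod_cast (pow_padicValNat_dvd : 2 ^ padicValNat 2 j ∣ j)) (ih (j-1))

lemma sum_range_double {M : Type*} [AddCommMonoid M] (g : ℕ → M) (L : ℕ) :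
    ∑ m ∈ range (2*L), g m = ∑ t ∈ range L, (g (2*t) + g (2*t+1)) := by
  induction L with
  | zero => simp
  | succ L ih =>
    have : 2 * (L+1) = (2*L) + 1 + 1 := by ring
    rw [this, sum_range_succ, sum_range_succ, ih, sum_range_succ]
    abel

lemma choose_even_sum (N : ℕ) (hN : 1 ≤ N) :
    (∑ t ∈ range (N+1), ((N.choose (2*t)) : ℤ)) = 2^(N-1)
    ∧ (∑ t ∈ range (N+1), ((N.choose (2*t+1)) : ℤ)) = 2^(N-1) := by
  have hsub : range (N+1) ⊆ range (2*(N+1)) := by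
    apply range_subset_range.2; omega
  have htot : ∑ m ∈ range (2*(N+1)), ((N.choose m : ℕ) : ℤ) = 2^N := by
    rw [← Finset.sum_subset hsub (by
      intro x _ hx
      simp only [mem_range, not_lt] at hx
      have : N.choose x = 0 := Nat.choose_eq_zero_of_lt (by omega)
      simp [this])]
    exact_mod_cast Nat.sum_range_choose N
  have halt : ∑ m ∈ range (2*(N+1)), ((-1:ℤ))^m * (N.choose m : ℤ) = 0 := by
    rw [← Finset.sum_subset hsub (by
      intro x _ hx
      simp only [mem_range, not_lt] at hx
      have : N.choose x = 0 := Nat.choose_eq_zero_of_lt (by omega)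
      simp [this])]
    exact Int.alternating_sum_range_choose_of_ne (by omega)
  rw [sum_range_double (fun m => ((N.choose m : ℕ) : ℤ)) (N+1)] at htot
  rw [sum_range_double (fun m => ((-1:ℤ))^m * (N.choose m : ℤ)) (N+1)] at halt
  have halt' : ∑ t ∈ range (N+1),
      (((N.choose (2*t)) : ℤ) - ((N.choose (2*t+1)) : ℤ)) = 0 := by
    rw [← halt]
    apply sum_congr rfl
    intro t _
    have h1 : ((-1:ℤ))^(2*t) = 1 := by
      rw [pow_mul]; norm_num
    have h2 : ((-1:ℤ))^(2*t+1) = -1 := by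
      rw [pow_succ, h1]; ring
    rw [h1, h2]; ring
  rw [sum_add_distrib] at htot
  rw [sum_sub_distrib] at halt'
  set E := ∑ t ∈ range (N+1), ((N.choose (2*t)) : ℤ)
  set O := ∑ t ∈ range (N+1), ((N.choose (2*t+1)) : ℤ)
  have h2N : (2:ℤ)^N = 2 * 2^(N-1) := by
    conv_lhs => rw [← Nat.sub_add_cancel hN]
    rw [pow_succ]; ring
  constructor
  · have : 2 * E = 2 * 2^(N-1) := by rw [← h2N]; linarith
    linarith
  · have : 2 * O = 2 * 2^(N-1) := by rw [← h2N]; linarith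
    linarith

/-- Subset-of-subset identity, valid whenever `s ≤ m` (no upper bound needed). -/
lemma choose_mul' (n m s : ℕ) (hsm : s ≤ m) :
    n.choose m * m.choose s = n.choose s * (n - s).choose (m - s) := by
  rcases le_or_gt m n with h | h
  · exact Nat.choose_mul hsm
  · have h1 : n.choose m = 0 := Nat.choose_eq_zero_of_lt h
    rcases le_or_gt s n with h2 | h2
    · have h3 : (n - s).choose (m - s) = 0 := Nat.choose_eq_zero_of_lt (by omega)
      simp [h1, h3]
    · have h3 : n.choose s = 0 := Nat.choose_eq_zero_of_lt h2
      simp [h1, h3]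

lemma innerSumEval (n j : ℕ) (hj : j < n) :
    2 * ∑ i ∈ range (n+1), ((n.choose (2*i+1) : ℤ) * ((2*i+1).choose j : ℤ))
      = (n.choose j : ℤ) * 2^(n-j) := by
  set N := n - j with hN
  have hN1 : 1 ≤ N := by omega
  -- rewrite each term
  have hterm : ∀ i ∈ range (n+1),
      (n.choose (2*i+1) : ℤ) * ((2*i+1).choose j : ℤ)
        = (n.choose j : ℤ) * (if j ≤ 2*i+1 then (N.choose (2*i+1-j) : ℤ) else 0) := by
    intro i _
    by_cases h : j ≤ 2*i+1
    · rw [if_pos h]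
      have := choose_mul' n (2*i+1) j h
      exact_mod_cast congrArg (Nat.cast : ℕ → ℤ) this
    · rw [if_neg h]
      have : (2*i+1).choose j = 0 := Nat.choose_eq_zero_of_lt (by omega)
      simp [this]
  rw [sum_congr rfl hterm, ← mul_sum]
  -- evaluate the conditional sum
  suffices hsum : ∑ i ∈ range (n+1), (if j ≤ 2*i+1 then (N.choose (2*i+1-j) : ℤ) else 0)
      = 2^(N-1) by
    rw [hsum]
    have h2N : (2:ℤ)^N = 2 * 2^(N-1) := by
      conv_lhs => rw [← Nat.sub_add_cancel hN1]
      rw [pow_succ]; ring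
    rw [h2N]; ring
  -- split at s := (j+1)/2  (the least i with j ≤ 2i+1)
  set s := j / 2 with hs
  have hsn : s ≤ n + 1 := by omega
  have hsplit := Finset.sum_Ico_consecutive
    (fun i => (if j ≤ 2*i+1 then (N.choose (2*i+1-j) : ℤ) else 0))
    (Nat.zero_le s) hsn
  have hzero : ∑ i ∈ Ico 0 s, (if j ≤ 2*i+1 then (N.choose (2*i+1-j) : ℤ) else 0) = 0 := by
    apply Finset.sum_eq_zero
    intro i hi
    simp only [mem_Ico] at hi
    rw [if_neg (by omega)]
  have hrange : range (n+1) = Ico 0 (n+1) := by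
    rw [Finset.range_eq_Ico]
  rw [hrange, ← hsplit, hzero, zero_add, Finset.sum_Ico_eq_sum_range]
  -- now sum over t in range (n+1-s) of N.choose (2*(s+t)+1 - j)
  have hcond : ∀ t, j ≤ 2*(s+t)+1 := by intro t; omega
  rcases Nat.even_or_odd j with ⟨r, hr⟩ | ⟨r, hr⟩
  · -- j = 2r even, s = r, 2(s+t)+1-j = 2t+1
    have hsr : s = r := by omega
    have : ∀ t ∈ range (n+1-s),
        (if j ≤ 2*(s+t)+1 then (N.choose (2*(s+t)+1-j) : ℤ) else 0)
          = (N.choose (2*t+1) : ℤ) := by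
      intro t _
      rw [if_pos (hcond t)]
      congr 2
      omega
    rw [sum_congr rfl this]
    have hsubset : range (N+1) ⊆ range (n+1-s) := by
      apply range_subset_range.2; omega
    rw [← Finset.sum_subset hsubset (by
      intro x _ hx
      simp only [mem_range, not_lt] at hx
      have : N.choose (2*x+1) = 0 := Nat.choose_eq_zero_of_lt (by omega)
      simp [this])]
    exact (choose_even_sum N hN1).2
  · -- j = 2r+1 odd, s = r, 2(s+t)+1-j = 2t
    have hsr : s = r := by omega
    have : ∀ t ∈ range (n+1-s),
        (if j ≤ 2*(s+t)+1 then (N.choose (2*(s+t)+1-j) : ℤ) else 0)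
          = (N.choose (2*t) : ℤ) := by
      intro t _
      rw [if_pos (hcond t)]
      congr 2
      omega
    rw [sum_congr rfl this]
    have hsubset : range (N+1) ⊆ range (n+1-s) := by
      apply range_subset_range.2; omega
    rw [← Finset.sum_subset hsubset (by
      intro x _ hx
      simp only [mem_range, not_lt] at hx
      have : N.choose (2*x) = 0 := Nat.choose_eq_zero_of_lt (by omega)
      simp [this])]
    exact (choose_even_sum N hN1).1

lemma alpha_pos {m : ℕ} (hm : m ≠ 0) : 1 ≤ alpha m := by
  have hne : Nat.digits 2 m ≠ [] := Nat.digits_ne_nil_iff_ne_zero.mpr hm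
  have hlast := Nat.getLast_digit_ne_zero 2 hm
  have hmem : (Nat.digits 2 m).getLast hne ∈ Nat.digits 2 m := List.getLast_mem hne
  have := List.single_le_sum (l := Nat.digits 2 m) (by intro x _; omega) _ hmem
  unfold alpha
  omega

lemma legendre2 (m : ℕ) : padicValNat 2 (Nat.factorial m) = m - alpha m := by
  haveI : Fact (Nat.Prime 2) := ⟨Nat.prime_two⟩
  have := sub_one_mul_padicValNat_factorial (p := 2) m
  simpa [alpha] using this

/-- Main identity: `2^(k+1) * oddSum n k = Σ_j bcoef k j * C(n,j) * 2^(n-j)` for `k < n`. -/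
lemma main_identity (n k : ℕ) (hkn : k < n) :
    (2:ℤ)^(k+1) * (oddSum n k : ℤ)
      = ∑ j ∈ range (k+1), bcoef k j * ((n.choose j : ℤ) * 2^(n-j)) := by
  have step1 : (2:ℤ)^(k+1) * (oddSum n k : ℤ)
      = 2 * ∑ i ∈ range (n+1), (n.choose (2*i+1) : ℤ) * ((2*i+1 : ℤ) - 1)^k := by
    unfold oddSum
    push_cast
    rw [mul_sum, mul_sum]
    apply sum_congr rfl
    intro i _
    have : ((2*i+1 : ℤ) - 1)^k = 2^k * (i:ℤ)^k := by
      rw [show (2*(i:ℤ)+1) - 1 = 2 * i by ring, mul_pow]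
    rw [this]
    ring
  rw [step1]
  have step2 : ∀ i ∈ range (n+1),
      (n.choose (2*i+1) : ℤ) * ((2*i+1 : ℤ) - 1)^k
        = ∑ j ∈ range (k+1), bcoef k j * ((n.choose (2*i+1) : ℤ) * ((2*i+1).choose j : ℤ)) := by
    intro i _
    have h := bcoef_newton k (2*i+1)
    have hcast : ((2*i+1 : ℕ) : ℤ) = 2*(i:ℤ)+1 := by push_cast; ring
    rw [hcast] at h
    rw [h, mul_sum]
    apply sum_congr rfl
    intro j _
    ring
  rw [sum_congr rfl step2, Finset.sum_comm, mul_sum]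
  apply sum_congr rfl
  intro j hj
  simp only [mem_range] at hj
  rw [← mul_sum, ← mul_assoc, mul_comm (2:ℤ) (bcoef k j), mul_assoc,
    innerSumEval n j (by omega)]

/-- `ν(Σ_{i} C(n,2i+1) i^k) ≥ n − k − α(n)`, stated in the equivalent divisibility form
`2^{max(0, n−k−α(n))} ∣ Σ_{i} C(n,2i+1) i^k` (which also covers the case of a zero sum,
where `ν = ∞`). -/
theorem stmt4 (n k : ℕ) :
    2 ^ (((n : ℤ) - (k : ℤ) - (alpha n : ℤ)).toNat) ∣ oddSum n k := by
  haveI : Fact (Nat.Prime 2) := ⟨Nat.prime_two⟩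
  by_cases hpos : (n : ℤ) - (k : ℤ) - (alpha n : ℤ) ≤ 0
  · have : ((n : ℤ) - (k : ℤ) - (alpha n : ℤ)).toNat = 0 := by omega
    simp [this]
  · push_neg at hpos
    have hkan : k + alpha n < n := by
      have := hpos; omega
    have htn : ((n : ℤ) - (k : ℤ) - (alpha n : ℤ)).toNat = n - k - alpha n := by omega
    rw [htn]
    set E := n - k - alpha n with hE
    have hkn : k < n := by omega
    -- each summand divisible by 2^(n+1-alpha n)
    have hdvd : (2:ℤ)^(n + 1 - alpha n) ∣ (2:ℤ)^(k+1) * (oddSum n k : ℤ) := by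
      rw [main_identity n k hkn]
      apply Finset.dvd_sum
      intro j hj
      simp only [mem_range] at hj
      have hjn : j < n := by omega
      -- valuation bookkeeping
      have hcj : n.choose j ≠ 0 := (Nat.choose_pos (by omega)).ne'
      have hfact : n.choose j * (Nat.factorial j * Nat.factorial (n-j)) = Nat.factorial n := by
        rw [← mul_assoc]
        exact Nat.choose_mul_factorial_mul_factorial (le_of_lt hjn)
      have hvals : padicValNat 2 (n.choose j) + (padicValNat 2 (Nat.factorial j)
          + padicValNat 2 (Nat.factorial (n-j))) = padicValNat 2 (Nat.factorial n) := by
        rw [← padicValNat.mul (Nat.factorial_ne_zero _) (Nat.factorial_ne_zero _),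
          ← padicValNat.mul hcj (by positivity), hfact]
      have hLn := legendre2 n
      have hLj := legendre2 j
      have hLnj := legendre2 (n-j)
      have han : alpha n ≤ n := (Nat.digit_sum_le 2 n)
      have haj : alpha j ≤ j := (Nat.digit_sum_le 2 j)
      have hanj1 : 1 ≤ alpha (n-j) := alpha_pos (by omega)
      have hanj2 : alpha (n-j) ≤ n - j := Nat.digit_sum_le 2 (n-j)
      -- key inequality
      have hineq : n + 1 - alpha n ≤ padicValNat 2 (Nat.factorial j)
          + padicValNat 2 (n.choose j) + (n - j) := by
        omega
      -- assemble the divisibility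
      have hd1 : (2:ℤ)^(padicValNat 2 (Nat.factorial j)) ∣ bcoef k j := bcoef_dvd k j
      have hd2 : (2:ℤ)^(padicValNat 2 (n.choose j)) ∣ (n.choose j : ℤ) := by
        exact_mod_cast (pow_padicValNat_dvd : 2 ^ padicValNat 2 (n.choose j) ∣ n.choose j)
      have hd3 : (2:ℤ)^(padicValNat 2 (Nat.factorial j) + padicValNat 2 (n.choose j) + (n-j))
          ∣ bcoef k j * ((n.choose j : ℤ) * 2^(n-j)) := by
        rw [pow_add, pow_add, mul_assoc]
        exact mul_dvd_mul hd1 (mul_dvd_mul hd2 dvd_rfl)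
      exact dvd_trans (pow_dvd_pow 2 hineq) hd3
    -- cancel 2^(k+1)
    have hsplit : n + 1 - alpha n = (k+1) + E := by omega
    rw [hsplit, pow_add] at hdvd
    have hcancel : (2:ℤ)^E ∣ (oddSum n k : ℤ) :=
      (mul_dvd_mul_iff_left (a := (2:ℤ)^(k+1)) (by positivity)).mp hdvd
    exact_mod_cast hcancel
end

section
/- Let n and k be nonnegative integers with n > k, and let Σ = Σ_{i ≥ 0} C(n, 2i+1)·i^k. Then ν(Σ) ≥ n − 1 − k − α(k) (equivalently, 2^{max(0, n−1−k−α(k))} divides Σ), and ν(Σ) = n − 1 − k − α(k) holds if and only if C(n−1−k, k) is odd. -/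
open Finset

/-- Signed finite difference: number of surjections [k]→[j] (as an integer). -/
def A (k j : ℕ) : ℤ := ∑ t ∈ range (j+1), (-1)^(j+t) * (Nat.choose j t) * (t:ℤ)^k

lemma A_ext (k j M : ℕ) (h : j + 1 ≤ M) :
    A k j = ∑ t ∈ range M, (-1)^(j+t) * (Nat.choose j t) * (t:ℤ)^k := by
  refine Finset.sum_subset (Finset.range_subset_range.2 h) ?_
  intro t _ ht
  simp only [Finset.mem_range, not_lt] at ht
  rw [Nat.choose_eq_zero_of_lt (by omega)]
  simp

/-- Binomial inversion: `i^k = ∑_j A k j * C(i,j)`. -/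
lemma A_inv (k i : ℕ) : (i:ℤ)^k = ∑ j ∈ range (i+1), A k j * (Nat.choose i j) := by
  have h0 : ∑ j ∈ range (i+1), A k j * (Nat.choose i j)
      = ∑ j ∈ range (i+1), ∑ t ∈ range (i+1),
          (-1)^(j+t) * (Nat.choose j t) * (t:ℤ)^k * (Nat.choose i j) := by
    refine Finset.sum_congr rfl fun j hj => ?_
    rw [A_ext k j (i+1) (by simp at hj; omega), Finset.sum_mul]
  rw [h0, Finset.sum_comm]
  have inner : ∀ t ∈ range (i+1),
      ∑ j ∈ range (i+1), (-1)^(j+t) * (Nat.choose j t) * (t:ℤ)^k * (Nat.choose i j)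
      = (t:ℤ)^k * (Nat.choose i t) * (if i - t = 0 then 1 else 0) := by
    intro t ht
    simp only [Finset.mem_range] at ht
    have htle : t ≤ i := by omega
    have hsplit : ∑ j ∈ Finset.Ico t (i+1), (-1)^(j+t) * ((Nat.choose j t : ℕ):ℤ) * (t:ℤ)^k * (Nat.choose i j)
        = ∑ j ∈ range (i+1), (-1)^(j+t) * (Nat.choose j t) * (t:ℤ)^k * (Nat.choose i j) := by
      refine Finset.sum_subset ?_ (fun j _ hj => ?_)
      · rw [Finset.range_eq_Ico]
        exact Finset.Ico_subset_Ico (Nat.zero_le _) le_rfl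
      · simp only [Finset.mem_Ico, Finset.mem_range, not_and, not_le, not_lt] at *
        rw [Nat.choose_eq_zero_of_lt (by omega)]
        simp
    rw [← hsplit, Finset.sum_Ico_eq_sum_range]
    have hterm : ∀ s ∈ range (i+1-t), (-1)^((t+s)+t) * ((Nat.choose (t+s) t : ℕ) : ℤ) * (t:ℤ)^k
          * (Nat.choose i (t+s))
        = (t:ℤ)^k * (Nat.choose i t) * ((-1)^s * (Nat.choose (i-t) s)) := by
      intro s hs
      simp only [Finset.mem_range] at hs
      have h1 : (Nat.choose i (t+s)) * (Nat.choose (t+s) t) = Nat.choose i t * Nat.choose (i-t) s := by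
        have := Nat.choose_mul (n := i) (k := t+s) (s := t) (by omega)
        simpa using this
      have h2 : ((-1:ℤ))^(t+s+t) = (-1)^s := by
        rw [show t+s+t = 2*t+s by ring, pow_add, pow_mul]
        simp
      have h1' : ((Nat.choose i (t+s) : ℕ):ℤ) * ((Nat.choose (t+s) t : ℕ):ℤ)
          = ((Nat.choose i t : ℕ):ℤ) * ((Nat.choose (i-t) s : ℕ):ℤ) := by exact_mod_cast h1
      calc (-1:ℤ)^((t+s)+t) * ((Nat.choose (t+s) t : ℕ) : ℤ) * (t:ℤ)^k * (Nat.choose i (t+s))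
          = (-1:ℤ)^s * (t:ℤ)^k * (((Nat.choose i (t+s) : ℕ):ℤ) * ((Nat.choose (t+s) t : ℕ):ℤ)) := by
            rw [h2]; ring
        _ = (t:ℤ)^k * (Nat.choose i t) * ((-1)^s * (Nat.choose (i-t) s)) := by rw [h1']; ring
    rw [Finset.sum_congr rfl hterm, ← Finset.mul_sum]
    congr 1
    rw [show i+1-t = (i-t)+1 by omega]
    exact_mod_cast Int.alternating_sum_range_choose (n := i - t)
  rw [Finset.sum_congr rfl inner, Finset.sum_eq_single i]
  · simp
  · intro t ht hne
    simp only [Finset.mem_range] at ht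
    rw [if_neg (by omega)]
    ring
  · intro h
    simp at h

/-- Convolution recurrence. -/
lemma A_conv (k j : ℕ) :
    A (k+1) (j+1) = ∑ m ∈ Finset.Icc 1 (k+1), (Nat.choose (k+1) m : ℤ) * A (k+1-m) j := by
  have key : ∀ t : ℕ, ∑ m ∈ Finset.Icc 1 (k+1), (Nat.choose (k+1) m : ℤ) * (t:ℤ)^(k+1-m)
      = ((t:ℤ)+1)^(k+1) - (t:ℤ)^(k+1) := by
    intro t
    have hb : ((t:ℤ)+1)^(k+1) = ∑ m ∈ range (k+2), (Nat.choose (k+1) m : ℤ) * (t:ℤ)^(k+1-m) := by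
      rw [add_comm ((t:ℤ)) 1, add_pow]
      refine Finset.sum_congr rfl fun m hm => ?_
      rw [one_pow]; ring
    have hsp : ∑ m ∈ range (k+2), (Nat.choose (k+1) m : ℤ) * (t:ℤ)^(k+1-m)
        = (∑ m ∈ Finset.Icc 1 (k+1), (Nat.choose (k+1) m : ℤ) * (t:ℤ)^(k+1-m)) + (t:ℤ)^(k+1) := by
      rw [Finset.sum_range_succ' (fun m => (Nat.choose (k+1) m : ℤ) * (t:ℤ)^(k+1-m))]
      rw [← Finset.Ico_add_one_right_eq_Icc, Finset.sum_Ico_eq_sum_range]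
      simp [add_comm 1]
    rw [hb, hsp]; ring
  set S1 := ∑ t ∈ range (j+1), (-1:ℤ)^(j+t) * (Nat.choose j t) * ((t:ℤ)+1)^(k+1) with hS1
  set S2 := ∑ t ∈ range (j+1), (-1:ℤ)^(j+t) * (Nat.choose j (t+1)) * ((t:ℤ)+1)^(k+1) with hS2
  have hR : ∑ m ∈ Finset.Icc 1 (k+1), (Nat.choose (k+1) m : ℤ) * A (k+1-m) j
      = S1 - A (k+1) j := by
    have : ∑ m ∈ Finset.Icc 1 (k+1), (Nat.choose (k+1) m : ℤ) * A (k+1-m) j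
        = ∑ t ∈ range (j+1), (-1:ℤ)^(j+t) * (Nat.choose j t) * (((t:ℤ)+1)^(k+1) - (t:ℤ)^(k+1)) := by
      simp only [A, Finset.mul_sum]
      rw [Finset.sum_comm]
      refine Finset.sum_congr rfl fun t ht => ?_
      rw [← key t, Finset.mul_sum]
      exact Finset.sum_congr rfl fun m hm => by ring
    rw [this, hS1, A, ← Finset.sum_sub_distrib]
    exact Finset.sum_congr rfl fun t ht => by ring
  have hL : A (k+1) (j+1) = S1 + S2 := by
    rw [A, Finset.sum_range_succ' (fun t => (-1:ℤ)^(j+1+t) * (Nat.choose (j+1) t) * (t:ℤ)^(k+1))]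
    simp only [Nat.cast_zero, zero_pow (Nat.succ_ne_zero k), mul_zero, add_zero]
    rw [hS1, hS2, ← Finset.sum_add_distrib]
    refine Finset.sum_congr rfl fun t ht => ?_
    rw [Nat.choose_succ_succ]
    push_cast
    have hsg : ((-1:ℤ))^(j+1+(t+1)) = (-1)^(j+t) := by
      rw [show j+1+(t+1) = (j+t)+2 by ring, pow_add]; simp
    rw [hsg]
    ring
  have hS2A : S2 = - A (k+1) j := by
    rw [A_ext (k+1) j (j+2) (by omega)]
    rw [Finset.sum_range_succ' (fun t => (-1:ℤ)^(j+t) * (Nat.choose j t) * (t:ℤ)^(k+1))]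
    simp only [Nat.cast_zero, zero_pow (Nat.succ_ne_zero k), mul_zero, add_zero]
    rw [← Finset.sum_neg_distrib]
    refine Finset.sum_congr rfl fun t ht => ?_
    push_cast
    have hsg : ((-1:ℤ))^(j+(t+1)) = -(-1)^(j+t) := by
      rw [show j+(t+1) = (j+t)+1 by ring, pow_succ]; ring
    rw [hsg]
    ring
  rw [hR, hL, hS2A]
  ring

lemma A_vanish : ∀ j k : ℕ, k < j → A k j = 0 := by
  intro j
  induction j using Nat.strong_induction_on with
  | _ j ih =>
    intro k hk
    match j, k with
    | j+1, 0 =>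
      have : A 0 (j+1) = (-1:ℤ)^(j+1) * ∑ t ∈ range (j+2), (-1:ℤ)^t * (Nat.choose (j+1) t) := by
        rw [A, Finset.mul_sum]
        refine Finset.sum_congr rfl fun t ht => ?_
        rw [pow_add, pow_zero]
        ring
      rw [this, Int.alternating_sum_range_choose_of_ne (Nat.succ_ne_zero j), mul_zero]
    | j+1, k+1 =>
      rw [A_conv]
      refine Finset.sum_eq_zero fun m hm => ?_
      simp only [Finset.mem_Icc] at hm
      rw [ih j (by omega) (k+1-m) (by omega), mul_zero]

lemma A_diag : ∀ k : ℕ, A k k = (Nat.factorial k : ℤ) := by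
  intro k
  induction k with
  | zero => simp [A]
  | succ k ih =>
    rw [A_conv, Finset.sum_eq_single 1]
    · rw [show k+1-1 = k from rfl, ih, Nat.choose_one_right]
      rw [Nat.factorial_succ]
      push_cast
      simp
    · intro m hm hne
      simp only [Finset.mem_Icc] at hm
      rw [A_vanish k (k+1-m) (by omega), mul_zero]
    · intro hn
      simp at hn

lemma alpha_le (n : ℕ) : alpha n ≤ n := Nat.digit_sum_le 2 n

lemma alpha_pos_s5 : ∀ n : ℕ, 0 < n → 0 < alpha n := by
  intro n
  induction n using Nat.strong_induction_on with
  | _ n ih =>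
    intro hn
    rw [alpha, Nat.digits_def' (by norm_num) hn]
    simp only [List.sum_cons]
    rcases Nat.even_or_odd n with he | ho
    · have h2 : 0 < n / 2 := by
        rcases he with ⟨r, hr⟩; omega
      have := ih (n/2) (by omega) h2
      rw [alpha] at this
      omega
    · have : n % 2 = 1 := Nat.odd_iff.1 ho
      omega

instance fact2 : Fact (Nat.Prime 2) := ⟨Nat.prime_two⟩

lemma vfac (r : ℕ) : (padicValNat 2 (Nat.factorial r) : ℤ) = (r : ℤ) - alpha r := by
  have h := sub_one_mul_padicValNat_factorial (p := 2) r
  simp only [show (2:ℕ) - 1 = 1 from rfl, one_mul] at h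
  rw [h]
  have h1 := alpha_le r
  have he : alpha r = (Nat.digits 2 r).sum := rfl
  omega

lemma vchoose {m k : ℕ} (h : m ≤ k) :
    (padicValNat 2 (Nat.choose k m) : ℤ) = alpha m + alpha (k-m) - alpha k := by
  have key := Nat.choose_mul_factorial_mul_factorial h
  have h1 : padicValNat 2 (Nat.choose k m * Nat.factorial m * Nat.factorial (k-m))
      = padicValNat 2 (Nat.factorial k) := by rw [key]
  rw [padicValNat.mul (Nat.mul_pos (Nat.choose_pos h) (Nat.factorial_pos m)).ne' (Nat.factorial_ne_zero _),
      padicValNat.mul (Nat.choose_pos h).ne' (Nat.factorial_ne_zero _)] at h1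
  have h2 : (padicValNat 2 (Nat.choose k m) : ℤ) + padicValNat 2 (Nat.factorial m)
      + padicValNat 2 (Nat.factorial (k-m)) = padicValNat 2 (Nat.factorial k) := by
    exact_mod_cast congrArg (Nat.cast : ℕ → ℤ) h1
  rw [vfac, vfac, vfac] at h2
  have hc : ((k - m : ℕ) : ℤ) = (k:ℤ) - m := by omega
  rw [hc] at h2
  linarith

lemma pow2_dvd_choose {m k : ℕ} (h : m ≤ k) (e : ℕ)
    (he : (e : ℤ) ≤ (alpha m : ℤ) + alpha (k-m) - alpha k) :
    (2:ℤ)^e ∣ (Nat.choose k m : ℤ) := by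
  have h1 : (2:ℕ)^(padicValNat 2 (Nat.choose k m)) ∣ Nat.choose k m := pow_padicValNat_dvd
  have h2 : e ≤ padicValNat 2 (Nat.choose k m) := by
    have := vchoose h
    omega
  exact dvd_trans (pow_dvd_pow 2 h2) (by exact_mod_cast h1)

lemma pow2_dvd_fac (r : ℕ) (e : ℕ) (he : (e:ℤ) ≤ (r:ℤ) - alpha r) :
    (2:ℤ)^e ∣ (Nat.factorial r : ℤ) := by
  have h1 : (2:ℕ)^(padicValNat 2 (Nat.factorial r)) ∣ Nat.factorial r := pow_padicValNat_dvd
  have h2 : e ≤ padicValNat 2 (Nat.factorial r) := by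
    have := vfac r
    omega
  exact dvd_trans (pow_dvd_pow 2 h2) (by exact_mod_cast h1)

lemma A_bound : ∀ j k : ℕ, j < k →
    (2:ℤ) ^ (((2*j+1 : ℤ) - k - alpha k).toNat) ∣ A k j := by
  intro j
  induction j with
  | zero =>
    intro k hk
    have hA : A k 0 = 0 := by
      simp [A, zero_pow (show k ≠ 0 by omega)]
    simp [hA]
  | succ j ih =>
    intro k hk
    obtain ⟨k', rfl⟩ : ∃ k', k = k'+1 := ⟨k-1, by omega⟩
    rw [A_conv]
    refine Finset.dvd_sum fun m hm => ?_
    simp only [Finset.mem_Icc] at hm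
    have hm1 : 1 ≤ m := hm.1
    have hmk : m ≤ k'+1 := hm.2
    have ham : 1 ≤ alpha m := alpha_pos_s5 m (by omega)
    rcases lt_trichotomy (k'+1-m) j with hlt | heq | hgt
    · rw [A_vanish _ _ hlt, mul_zero]
      exact dvd_zero _
    · -- boundary: k'+1-m = j, A j j = j!
      rw [heq, A_diag]
      have hmval : m = k'+1-j := by omega
      have hKj : j + 2 ≤ k'+1 := by omega
      have hsub : alpha (k'+1-m) = alpha j := by rw [heq]
      -- choose exponent e1 for choose, e2 for factorial
      set v1 : ℤ := (alpha m : ℤ) + alpha (k'+1-m) - alpha (k'+1) with hv1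
      have hv1nn : 0 ≤ v1 := by have := vchoose hmk; have := (padicValNat 2 ((k'+1).choose m)).zero_le; omega
      set v2 : ℤ := (j:ℤ) - alpha j with hv2
      have hv2nn : 0 ≤ v2 := by have := alpha_le j; omega
      have hd1 : (2:ℤ)^(v1.toNat) ∣ (Nat.choose (k'+1) m : ℤ) :=
        pow2_dvd_choose hmk _ (by rw [Int.toNat_of_nonneg hv1nn])
      have hd2 : (2:ℤ)^(v2.toNat) ∣ (Nat.factorial j : ℤ) :=
        pow2_dvd_fac j _ (by rw [Int.toNat_of_nonneg hv2nn])
      have hcomb : (2:ℤ)^(v1.toNat + v2.toNat) ∣ (Nat.choose (k'+1) m : ℤ) * (Nat.factorial j : ℤ) := by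
        rw [pow_add]
        exact mul_dvd_mul hd1 hd2
      refine dvd_trans (pow_dvd_pow 2 ?_) hcomb
      rw [Int.toNat_le]
      push_cast [Int.toNat_of_nonneg hv1nn, Int.toNat_of_nonneg hv2nn]
      rw [hv1, hv2, hsub, hmval]
      have : (1:ℤ) ≤ alpha (k'+1-j) := by exact_mod_cast alpha_pos_s5 (k'+1-j) (by omega)
      have hc : ((k'+1-j : ℕ):ℤ) = (k':ℤ)+1-j := by omega
      omega
    · -- j < k'+1-m : use IH
      have hd1 : (2:ℤ)^((( (alpha m : ℤ) + alpha (k'+1-m) - alpha (k'+1)).toNat)) ∣ (Nat.choose (k'+1) m : ℤ) := by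
        refine pow2_dvd_choose hmk _ ?_
        rw [Int.toNat_of_nonneg]
        have := vchoose hmk
        have := (padicValNat 2 ((k'+1).choose m)).zero_le
        omega
      have hd2 := ih (k'+1-m) hgt
      have hcomb := mul_dvd_mul hd1 hd2
      rw [← pow_add] at hcomb
      refine dvd_trans (pow_dvd_pow 2 ?_) hcomb
      rw [Int.toNat_le]
      push_cast
      set w1 : ℤ := ((alpha m : ℤ) + alpha (k'+1-m) - alpha (k'+1))
      have hw1 : 0 ≤ w1 := by
        have := vchoose hmk
        have := (padicValNat 2 ((k'+1).choose m)).zero_le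
        omega
      set w2 : ℤ := ((2*j+1 : ℤ) - (k'+1-m : ℕ) - alpha (k'+1-m))
      have h1 : (w1.toNat : ℤ) = w1 := Int.toNat_of_nonneg hw1
      have h2 : (w2.toNat : ℤ) ≥ w2 := Int.self_le_toNat w2
      have h3 : (w2.toNat : ℤ) ≥ 0 := by positivity
      have hc : ((k'+1-m : ℕ):ℤ) = (k':ℤ)+1-m := by omega
      have hm2 : (2:ℤ) ≤ m + alpha m := by
        have : (1:ℤ) ≤ m := by exact_mod_cast hm1
        have : (1:ℤ) ≤ alpha m := by exact_mod_cast ham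
        omega
      omega

def T (n j : ℕ) : ℕ := ∑ i ∈ range (n+1), Nat.choose n (2*i+1) * Nat.choose i j

def U (n j : ℕ) : ℕ := ∑ i ∈ range (n+1), Nat.choose n (2*i) * Nat.choose i j

lemma T_succ (n j : ℕ) : T (n+1) j = T n j + U n j := by
  rw [T, U, T]
  have h1 : ∀ i ∈ range (n+2), Nat.choose (n+1) (2*i+1) * Nat.choose i j
      = Nat.choose n (2*i) * Nat.choose i j + Nat.choose n (2*i+1) * Nat.choose i j := by
    intro i _
    rw [Nat.choose_succ_succ (n := n) (k := 2*i)]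
    ring
  rw [Finset.sum_congr rfl h1, Finset.sum_add_distrib]
  rw [Finset.sum_range_succ (fun i => Nat.choose n (2*i) * Nat.choose i j),
      Finset.sum_range_succ (fun i => Nat.choose n (2*i+1) * Nat.choose i j)]
  have hz1 : Nat.choose n (2*(n+1)) = 0 := Nat.choose_eq_zero_of_lt (by omega)
  have hz2 : Nat.choose n (2*(n+1)+1) = 0 := Nat.choose_eq_zero_of_lt (by omega)
  rw [hz1, hz2]
  simp [add_comm]

lemma aux_shift (n j : ℕ) :
    ∑ i ∈ range (n+1), Nat.choose n (2*i+2) * Nat.choose (i+1) (j+1) = U n (j+1) := by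
  rw [Finset.sum_range_succ, Nat.choose_eq_zero_of_lt (show n < 2*n+2 by omega), zero_mul, add_zero]
  rw [U]
  rw [Finset.sum_range_succ' (fun i => Nat.choose n (2*i) * Nat.choose i (j+1))]
  have h0 : Nat.choose n (2*0) * Nat.choose 0 (j+1) = 0 := by
    simp [Nat.choose_eq_zero_of_lt (Nat.succ_pos j)]
  rw [h0, add_zero]
  refine Finset.sum_congr rfl fun i _ => ?_
  rw [show 2*(i+1) = 2*i+2 by ring]

lemma U_succ (n j : ℕ) : U (n+1) (j+1) = U n (j+1) + T n (j+1) + T n j := by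
  rw [U]
  rw [Finset.sum_range_succ' (fun i => Nat.choose (n+1) (2*i) * Nat.choose i (j+1))]
  have h0 : Nat.choose (n+1) (2*0) * Nat.choose 0 (j+1) = 0 := by
    simp [Nat.choose_eq_zero_of_lt (Nat.succ_pos j)]
  rw [h0, add_zero]
  have h1 : ∀ i ∈ range (n+1), Nat.choose (n+1) (2*(i+1)) * Nat.choose (i+1) (j+1)
      = Nat.choose n (2*i+2) * Nat.choose (i+1) (j+1)
        + (Nat.choose n (2*i+1) * Nat.choose i (j+1) + Nat.choose n (2*i+1) * Nat.choose i j) := by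
    intro i _
    rw [show 2*(i+1) = (2*i+1)+1 by ring, Nat.choose_succ_succ (n := n) (k := 2*i+1),
        Nat.choose_succ_succ (n := i) (k := j)]
    ring
  rw [Finset.sum_congr rfl h1, Finset.sum_add_distrib, Finset.sum_add_distrib, aux_shift]
  rw [T, T]
  ring

lemma U_succ_zero (n : ℕ) : U (n+1) 0 = U n 0 + T n 0 := by
  have hU : ∀ m : ℕ, U m 0 = (∑ i ∈ range m, Nat.choose m (2*i+2)) + 1 := by
    intro m
    rw [U, Finset.sum_range_succ' (fun i => Nat.choose m (2*i) * Nat.choose i 0)]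
    simp only [Nat.choose_zero_right, mul_one, Nat.mul_zero]
    have hc : ∀ i ∈ range m, Nat.choose m (2*(i+1)) = Nat.choose m (2*i+2) :=
      fun i _ => by rw [show 2*(i+1) = 2*i+2 by ring]
    rw [Finset.sum_congr rfl hc]
  rw [hU (n+1), hU n]
  have h1 : ∀ i ∈ range (n+1), Nat.choose (n+1) (2*i+2)
      = Nat.choose n (2*i+1) + Nat.choose n (2*i+2) := by
    intro i _
    rw [show 2*i+2 = (2*i+1)+1 by ring, Nat.choose_succ_succ (n := n) (k := 2*i+1)]
  rw [Finset.sum_congr rfl h1, Finset.sum_add_distrib]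
  have h2 : ∑ i ∈ range (n+1), Nat.choose n (2*i+2)
      = ∑ i ∈ range n, Nat.choose n (2*i+2) := by
    rw [Finset.sum_range_succ, Nat.choose_eq_zero_of_lt (by omega), add_zero]
  have h3 : T n 0 = ∑ i ∈ range (n+1), Nat.choose n (2*i+1) := by
    rw [T]
    refine Finset.sum_congr rfl fun i _ => ?_
    rw [Nat.choose_zero_right, mul_one]
  rw [h2, h3]
  omega

def Ucf (n j : ℕ) : ℕ :=
  2^(n-(2*j+1)) * (Nat.choose (n-j) j + if j = 0 then 0 else Nat.choose (n-1-j) (j-1))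

lemma TU_cf : ∀ n j : ℕ, 2*j+1 ≤ n →
    T n j = 2^(n-(2*j+1)) * Nat.choose (n-1-j) j ∧ U n j = Ucf n j := by
  intro n
  induction n with
  | zero => intro j hj; omega
  | succ n ihn =>
    intro j hj
    rcases eq_or_lt_of_le hj with heq | hlt
    · -- base: n+1 = 2j+1, i.e. n = 2j
      have hn : n = 2*j := by omega
      subst hn
      constructor
      · rw [T, Finset.sum_eq_single j]
        · rw [Nat.choose_self, Nat.choose_self,
            show 2*j+1-(2*j+1) = 0 by omega, show 2*j+1-1-j = j by omega,
            Nat.choose_self]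
          norm_num
        · intro i hi hne
          simp only [Finset.mem_range] at hi
          rcases lt_or_ge i j with h | h
          · rw [Nat.choose_eq_zero_of_lt h, mul_zero]
          · rw [Nat.choose_eq_zero_of_lt (show 2*j+1 < 2*i+1 by omega), zero_mul]
        · intro hj'
          simp only [Finset.mem_range] at hj'
          omega
      · rw [U, Finset.sum_eq_single j, Ucf]
        · rw [Nat.choose_self, mul_one, show 2*j+1-(2*j+1) = 0 by omega, pow_zero, one_mul,
            show 2*j+1-j = j+1 by omega]
          cases j with
          | zero => norm_num
          | succ j' =>
            rw [if_neg (Nat.succ_ne_zero j'), show 2*(j'+1)+1-1-(j'+1) = j'+1 by omega,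
              show (j'+1)-1 = j' by omega]
            simp only [Nat.choose_succ_self_right]
            omega
        · intro i hi hne
          simp only [Finset.mem_range] at hi
          rcases lt_or_ge i j with h | h
          · rw [Nat.choose_eq_zero_of_lt h, mul_zero]
          · rw [Nat.choose_eq_zero_of_lt (show 2*j+1 < 2*i by omega), zero_mul]
        · intro hj'
          simp only [Finset.mem_range] at hj'
          omega
    · -- step: 2j+1 ≤ n
      have hj' : 2*j+1 ≤ n := by omega
      obtain ⟨iT, iU⟩ := ihn j hj'
      set e := n - (2*j+1) with he
      have hee : n+1-(2*j+1) = e+1 := by omega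
      have pascal : Nat.choose (n-j) j
          = Nat.choose (n-1-j) j + (if j = 0 then 0 else Nat.choose (n-1-j) (j-1)) := by
        cases j with
        | zero => simp
        | succ j' =>
          rw [if_neg (Nat.succ_ne_zero j'), show n-(j'+1) = (n-1-(j'+1))+1 by omega,
            Nat.choose_succ_succ, show (j'+1)-1 = j' by omega]
          simp only [Nat.succ_eq_add_one]
          omega
      constructor
      · rw [T_succ, iT, iU, Ucf, ← he, hee]
        rw [show n+1-1-j = n-j by omega, pascal]
        ring
      · cases j with
        | zero =>
          rw [U_succ_zero, iT, iU, Ucf, Ucf, ← he, hee]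
          simp only [reduceIte, Nat.choose_zero_right, Nat.sub_zero, add_zero, mul_one]
          ring
        | succ j' =>
          have hj'' : 2*j'+1 ≤ n := by omega
          obtain ⟨iT', _⟩ := ihn j' hj''
          rw [U_succ, iT, iU, iT', Ucf, Ucf, ← he, hee]
          simp only [if_neg (Nat.succ_ne_zero j')]
          rw [show n-(2*j'+1) = e+2 by omega, show n-1-j' = n-(j'+1) by omega,
            show (j'+1)-1 = j' by omega]
          have pascal2 : Nat.choose (n+1-(j'+1)) (j'+1)
              = Nat.choose (n-(j'+1)) j' + Nat.choose (n-(j'+1)) (j'+1) := by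
            rw [show n+1-(j'+1) = (n-(j'+1))+1 by omega, Nat.choose_succ_succ]
          rw [show n+1-1-(j'+1) = n-(j'+1) by omega, pascal2]
          have pascal3 := pascal
          rw [if_neg (Nat.succ_ne_zero j'), show (j'+1)-1 = j' by omega] at pascal3
          rw [pascal3]
          ring

lemma T_closed (n j : ℕ) (hn : 1 ≤ n) :
    T n j = 2^(n-(2*j+1)) * Nat.choose (n-1-j) j := by
  rcases le_or_gt (2*j+1) n with h | h
  · exact (TU_cf n j h).1
  · have hT : T n j = 0 := by
      refine Finset.sum_eq_zero fun i hi => ?_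
      rcases lt_or_ge i j with h2 | h2
      · rw [Nat.choose_eq_zero_of_lt h2, mul_zero]
      · rw [Nat.choose_eq_zero_of_lt (show n < 2*i+1 by omega), zero_mul]
    rw [hT, Nat.choose_eq_zero_of_lt (show n-1-j < j by omega), mul_zero]

lemma oddSum_eq (n k : ℕ) (hk : k < n) :
    (oddSum n k : ℤ)
      = ∑ j ∈ range (k+1), A k j * 2^(n-(2*j+1)) * (Nat.choose (n-1-j) j : ℤ) := by
  have hn1 : 1 ≤ n := by omega
  have h1 : (oddSum n k : ℤ)
      = ∑ i ∈ range (n+1), (Nat.choose n (2*i+1) : ℤ) * (i:ℤ)^k := by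
    rw [oddSum]
    push_cast
    rfl
  have h2 : (oddSum n k : ℤ)
      = ∑ i ∈ range (n+1), ∑ j ∈ range (n+1),
          (Nat.choose n (2*i+1) : ℤ) * (A k j * (Nat.choose i j : ℤ)) := by
    rw [h1]
    refine Finset.sum_congr rfl fun i hi => ?_
    simp only [Finset.mem_range] at hi
    have hext : ∑ j ∈ range (i+1), A k j * (Nat.choose i j : ℤ)
        = ∑ j ∈ range (n+1), A k j * (Nat.choose i j : ℤ) := by
      refine Finset.sum_subset (Finset.range_subset_range.2 (by omega)) fun j _ hj => ?_
      simp only [Finset.mem_range, not_lt] at hj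
      rw [Nat.choose_eq_zero_of_lt (by omega)]
      simp
    rw [A_inv k i, hext, Finset.mul_sum]
  rw [h2, Finset.sum_comm]
  have h3 : ∀ j ∈ range (n+1),
      ∑ i ∈ range (n+1), (Nat.choose n (2*i+1) : ℤ) * (A k j * (Nat.choose i j : ℤ))
      = A k j * 2^(n-(2*j+1)) * (Nat.choose (n-1-j) j : ℤ) := by
    intro j _
    have hT : ∑ i ∈ range (n+1), (Nat.choose n (2*i+1) : ℤ) * (A k j * (Nat.choose i j : ℤ))
        = A k j * (T n j : ℤ) := by
      rw [T]
      push_cast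
      rw [Finset.mul_sum]
      exact Finset.sum_congr rfl fun i _ => by ring
    rw [hT, T_closed n j hn1]
    push_cast
    ring
  rw [Finset.sum_congr rfl h3]
  refine (Finset.sum_subset (Finset.range_subset_range.2 (by omega)) fun j _ hj => ?_).symm
  simp only [Finset.mem_range, not_lt] at hj
  rw [A_vanish j k (by omega)]
  ring

lemma val_pow_mul_odd (a w : ℕ) (hw : Odd w) : padicValNat 2 (2^a * w) = a := by
  have hw0 : w ≠ 0 := by
    rintro rfl
    simp [Nat.odd_iff] at hw
  rw [padicValNat.mul (pow_ne_zero _ two_ne_zero) hw0, padicValNat.prime_pow,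
    padicValNat.eq_zero_of_not_dvd (by have := Nat.odd_iff.1 hw; omega), add_zero]

theorem stmt5 (n k : ℕ) (h : k < n) :
    (2 ^ (((n : ℤ) - 1 - (k : ℤ) - (alpha k : ℤ)).toNat) ∣ oddSum n k) ∧
    ((oddSum n k ≠ 0 ∧
        (padicValNat 2 (oddSum n k) : ℤ) = (n : ℤ) - 1 - (k : ℤ) - (alpha k : ℤ))
      ↔ Odd (Nat.choose (n - 1 - k) k)) := by
  have hn1 : 1 ≤ n := by omega
  set E : ℤ := (n:ℤ) - 1 - (k:ℤ) - (alpha k : ℤ) with hE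
  set C : ℕ := Nat.choose (n-1-k) k with hC
  have hdec : (oddSum n k : ℤ) = A k k * 2^(n-(2*k+1)) * (C : ℤ)
      + ∑ j ∈ range k, A k j * 2^(n-(2*j+1)) * (Nat.choose (n-1-j) j : ℤ) := by
    rw [oddSum_eq n k h, Finset.sum_range_succ]
    ring
  -- remainder divisibility
  have hRsum : (2:ℤ)^((E+1).toNat) ∣ ∑ j ∈ range k, A k j * 2^(n-(2*j+1)) * (Nat.choose (n-1-j) j : ℤ) := by
    refine Finset.dvd_sum fun j hj => ?_
    simp only [Finset.mem_range] at hj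
    rcases le_or_gt (2*j+1) n with hle | hgt
    · have h1 := A_bound j k hj
      have hcomb : (2:ℤ)^(((2*j+1 : ℤ) - k - alpha k).toNat + (n-(2*j+1)))
          ∣ A k j * 2^(n-(2*j+1)) * (Nat.choose (n-1-j) j : ℤ) := by
        rw [pow_add]
        exact Dvd.dvd.mul_right (mul_dvd_mul h1 dvd_rfl) _
      refine dvd_trans (pow_dvd_pow 2 ?_) hcomb
      rw [Int.toNat_le]
      have hge := Int.self_le_toNat ((2*j+1 : ℤ) - k - alpha k)
      have hc : ((n-(2*j+1) : ℕ) : ℤ) = (n:ℤ) - (2*j+1) := by omega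
      push_cast
      push_cast at hge hc
      omega
    · rw [show Nat.choose (n-1-j) j = 0 from Nat.choose_eq_zero_of_lt (by omega)]
      push_cast
      rw [mul_zero]
      exact dvd_zero _
  obtain ⟨R', hR'⟩ := hRsum
  -- factorial decomposition
  set v : ℕ := padicValNat 2 (Nat.factorial k) with hv
  have hvz : (v:ℤ) = (k:ℤ) - alpha k := vfac k
  obtain ⟨u, hu⟩ : 2^v ∣ Nat.factorial k := pow_padicValNat_dvd
  have huodd : Odd u := by
    rw [Nat.odd_iff]
    by_contra hm
    have h2 : 2 ∣ u := by omega
    obtain ⟨u', rfl⟩ := h2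
    have hdd : (2:ℕ)^(v+1) ∣ k.factorial := ⟨u', by rw [hu]; ring⟩
    rw [hv] at hdd
    exact pow_succ_padicValNat_not_dvd (p := 2) (Nat.factorial_ne_zero k) hdd
  by_cases hodd : Odd C
  · -- exact case
    have hC0 : C ≠ 0 := by
      rintro h0
      rw [h0] at hodd
      simp [Nat.odd_iff] at hodd
    have h2k : 2*k+1 ≤ n := by
      have := Nat.choose_eq_zero_iff (n := n-1-k) (k := k)
      omega
    have hEnn : 0 ≤ E := by
      have := alpha_le k
      rw [hE]
      omega
    have hexp : v + (n-(2*k+1)) = E.toNat := by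
      have h1 : (E.toNat : ℤ) = E := Int.toNat_of_nonneg hEnn
      omega
    have hW : (oddSum n k : ℤ) = 2^(E.toNat) * ((u:ℤ) * C + 2 * R') := by
      rw [hdec, hR', A_diag k, hu]
      rw [show (E+1).toNat = E.toNat + 1 by omega, ← hexp]
      push_cast
      ring
    set W : ℤ := (u:ℤ) * C + 2 * R' with hWdef
    have hWodd : Odd W := by
      refine Odd.add_even (Odd.mul ?_ ?_) ⟨R', by ring⟩
      · exact_mod_cast huodd
      · exact_mod_cast hodd
    have hWnn : 0 ≤ W := by
      by_contra hneg
      push_neg at hneg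
      have h1 : (0:ℤ) ≤ (oddSum n k : ℤ) := Int.natCast_nonneg _
      have h2 : (2:ℤ)^(E.toNat) > 0 := by positivity
      nlinarith [hW]
    have hWnat : oddSum n k = 2^(E.toNat) * W.toNat := by
      have : (oddSum n k : ℤ) = ((2^(E.toNat) * W.toNat : ℕ) : ℤ) := by
        rw [hW]
        push_cast [Int.toNat_of_nonneg hWnn]
        ring
      exact_mod_cast this
    have hWtodd : Odd W.toNat := by
      have h1 : ((W.toNat : ℤ)) = W := Int.toNat_of_nonneg hWnn
      rw [← h1] at hWodd
      exact_mod_cast hWodd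
    have hSne : oddSum n k ≠ 0 := by
      rw [hWnat]
      have : W.toNat ≠ 0 := by
        rintro h0
        rw [h0] at hWtodd
        simp [Nat.odd_iff] at hWtodd
      positivity
    have hval : padicValNat 2 (oddSum n k) = E.toNat := by
      rw [hWnat]
      exact val_pow_mul_odd _ _ hWtodd
    refine ⟨?_, ?_⟩
    · rw [hWnat]
      exact Dvd.intro _ rfl
    · constructor
      · intro _
        exact hodd
      · intro _
        refine ⟨hSne, ?_⟩
        rw [hval, Int.toNat_of_nonneg hEnn]
  · -- even case
    have hCd : 2 ∣ C := by
      rw [Nat.odd_iff] at hodd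
      omega
    have htk : (2:ℤ)^((E+1).toNat) ∣ A k k * 2^(n-(2*k+1)) * (C : ℤ) := by
      rcases Nat.eq_zero_or_pos C with h0 | hpos
      · rw [h0]
        push_cast
        rw [mul_zero]
        exact dvd_zero _
      · have hC0 : C ≠ 0 := hpos.ne'
        have h2k : 2*k+1 ≤ n := by
          have := Nat.choose_eq_zero_iff (n := n-1-k) (k := k)
          omega
        have hEnn : 0 ≤ E := by
          have := alpha_le k
          rw [hE]
          omega
        obtain ⟨C', hC'⟩ := hCd
        have hexp : v + (n-(2*k+1)) + 1 = (E+1).toNat := by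
          have h1 : ((E+1).toNat : ℤ) = E+1 := Int.toNat_of_nonneg (by omega)
          omega
        rw [A_diag k, hu, hC', ← hexp]
        push_cast
        rw [show ((2:ℤ)^v * u * 2^(n-(2*k+1)) * (2*C'))
            = 2^(v + (n-(2*k+1)) + 1) * (u * C') by rw [pow_add, pow_add]; ring]
        exact Dvd.intro _ rfl
    have hdvd1 : (2:ℤ)^((E+1).toNat) ∣ (oddSum n k : ℤ) := by
      rw [hdec]
      exact dvd_add htk ⟨R', hR'⟩
    have hdvd1n : 2^((E+1).toNat) ∣ oddSum n k := by
      have : ((2^((E+1).toNat) : ℕ) : ℤ) ∣ (oddSum n k : ℤ) := by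
        push_cast
        exact hdvd1
      exact_mod_cast this
    refine ⟨?_, ?_⟩
    · refine dvd_trans (pow_dvd_pow 2 ?_) hdvd1n
      exact Int.toNat_le_toNat (by omega)
    · constructor
      · rintro ⟨hne, hval⟩
        exfalso
        have hle : (E+1).toNat ≤ padicValNat 2 (oddSum n k) :=
          (padicValNat_dvd_iff_le hne).1 hdvd1n
        have hEnn : 0 ≤ E := by
          rw [← hval]
          exact Int.natCast_nonneg _
        have h1 : ((E+1).toNat : ℤ) = E + 1 := Int.toNat_of_nonneg (by omega)
        omega
      · intro hcon
        exact absurd hcon hodd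
end

section
/- Let e ≥ 2, let p be any integer, let δ ∈ {1,2}, and let n be a positive integer with ν(n) ≥ e − 1. Then ν(Σ_{i ≥ 0} C(2^e + δ, 2i+1)·(2i+1)^p·((2i+1)^n − 1)) = 2^e + ν(n) − e + δ − 1, where the sum is a rational number (the factors (2i+1)^p being integer powers, possibly negative, of odd integers). -/
/-- `Σ_{i ≥ 0} C(2^e+δ, 2i+1)·(2i+1)^p·((2i+1)^n − 1)` as a rational number, where `p : ℤ`
(so `(2i+1)^p` is a possibly negative integer power of the odd integer `2i+1`). -/
def lemSum (e δ : ℕ) (p : ℤ) (n : ℕ) : ℚ :=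
  ∑ i ∈ Finset.range (2 ^ e + δ),
    (Nat.choose (2 ^ e + δ) (2 * i + 1) : ℚ) * (2 * (i : ℚ) + 1) ^ p *
      ((2 * (i : ℚ) + 1) ^ n - 1)

namespace Stmt9
open Finset


/-- binary digit sum -/
def s2 (m : ℕ) : ℕ := (Nat.digits 2 m).sum

lemma s2_zero : s2 0 = 0 := by simp [s2]
lemma s2_one : s2 1 = 1 := by simp [s2]

lemma s2_two_mul (m : ℕ) : s2 (2 * m) = s2 m := by
  rcases Nat.eq_zero_or_pos m with h | h
  · simp [h, s2]
  · unfold s2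
    rw [Nat.digits_def' (by norm_num : 1 < 2) (by omega)]
    simp [Nat.mul_div_cancel_left _ (by norm_num : 0 < 2), Nat.mul_mod_right]

lemma s2_two_mul_add_one (m : ℕ) : s2 (2 * m + 1) = s2 m + 1 := by
  unfold s2
  rw [Nat.digits_def' (by norm_num : 1 < 2) (by omega)]
  have h1 : (2 * m + 1) % 2 = 1 := by omega
  have h2 : (2 * m + 1) / 2 = m := by omega
  rw [h1, h2]
  simp [Nat.add_comm]

lemma s2_pow (k : ℕ) : s2 (2 ^ k) = 1 := by
  induction k with
  | zero => simp [s2]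
  | succ k ih => rw [pow_succ, mul_comm, s2_two_mul, ih]

lemma s2_pow_add {k x : ℕ} (hx : x < 2 ^ k) : s2 (2 ^ k + x) = 1 + s2 x := by
  induction k generalizing x with
  | zero => interval_cases x; simp [s2]
  | succ k ih =>
    rcases Nat.even_or_odd x with ⟨y, hy⟩ | ⟨y, hy⟩
    · subst hy
      have hy2 : y < 2 ^ k := by rw [pow_succ] at hx; omega
      have : 2 ^ (k+1) + (y + y) = 2 * (2 ^ k + y) := by ring
      rw [this, s2_two_mul, ih hy2, ← two_mul, s2_two_mul]
    · subst hy
      have hy2 : y < 2 ^ k := by rw [pow_succ] at hx; omega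
      have : 2 ^ (k+1) + (2 * y + 1) = 2 * (2 ^ k + y) + 1 := by ring
      rw [this, s2_two_mul_add_one, ih hy2, s2_two_mul_add_one]
      omega

lemma s2_succ_le (m : ℕ) : s2 (m + 1) ≤ s2 m + 1 := by
  induction m using Nat.strong_induction_on with
  | _ m ih =>
    rcases Nat.even_or_odd m with ⟨y, hy⟩ | ⟨y, hy⟩
    · subst hy
      rw [← two_mul, s2_two_mul, ← s2_two_mul_add_one]
    · subst hy
      have h1 : 2 * y + 1 + 1 = 2 * (y + 1) := by ring
      rw [h1, s2_two_mul, s2_two_mul_add_one]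
      rcases Nat.eq_zero_or_pos y with h | h
      · simp [h, s2_one, s2_zero]
      · have := ih y (by omega)
        omega

lemma s2_le_log (m : ℕ) (hm : 1 ≤ m) : s2 m ≤ Nat.log 2 m + 1 := by
  have hlen : (Nat.digits 2 m).length = Nat.log 2 m + 1 :=
    Nat.digits_len 2 m (by norm_num) (by omega)
  calc s2 m ≤ (Nat.digits 2 m).length * 1 := by
        apply List.sum_le_card_nsmul
        intro x hx
        have := Nat.digits_lt_base (by norm_num) hx
        omega
    _ = Nat.log 2 m + 1 := by rw [hlen, mul_one]

lemma s2_le (m : ℕ) : s2 m ≤ m := by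
  induction m using Nat.strong_induction_on with
  | _ m ih =>
    match m, ih with
    | 0, _ => simp [s2_zero]
    | 1, _ => simp [s2_one]
    | (m+2), ih =>
      rcases Nat.even_or_odd (m+2) with ⟨y, hy⟩ | ⟨y, hy⟩
      · rw [hy, ← two_mul, s2_two_mul]
        have := ih y (by omega)
        omega
      · rw [hy, s2_two_mul_add_one]
        have := ih y (by omega)
        omega



lemma le_of_pow_dvd_pow_mul_odd {u x y : ℕ} (hu : Odd u) (h : 2 ^ x ∣ 2 ^ y * u) : x ≤ y := by
  by_contra hxy
  push_neg at hxy
  have h2 : 2 ^ (y + 1) ∣ 2 ^ y * u := dvd_trans (pow_dvd_pow 2 (by omega)) h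
  rw [pow_succ] at h2
  have : 2 ∣ u := by
    rcases h2 with ⟨c, hc⟩
    have hy : 0 < 2 ^ y := Nat.pow_pos (by norm_num)
    refine ⟨c, ?_⟩
    have : 2 ^ y * u = 2 ^ y * (2 * c) := by rw [hc]; ring
    exact Nat.eq_of_mul_eq_mul_left hy this
  rw [Nat.odd_iff] at hu
  omega

lemma odd_cancel {x u3 v u : ℕ} (hu3 : Odd u3) (hu : Odd u) (h : x * u3 = 2 ^ v * u) :
    ∃ u', Odd u' ∧ x = 2 ^ v * u' := by
  have hdvd : 2 ^ v ∣ x := by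
    have h1 : 2 ^ v ∣ x * u3 := ⟨u, h⟩
    have hc : Nat.Coprime (2 ^ v) u3 :=
      Nat.Coprime.pow_left _ hu3.coprime_two_left
    exact (Nat.Coprime.dvd_of_dvd_mul_right hc h1)
  rcases hdvd with ⟨x', hx'⟩
  refine ⟨x', ?_, hx'⟩
  subst hx'
  have hv : 0 < 2 ^ v := Nat.pow_pos (by norm_num)
  have hxu : x' * u3 = u := by
    have := h
    rw [mul_assoc] at this
    exact Nat.eq_of_mul_eq_mul_left hv this
  rw [Nat.odd_iff] at hu hu3 ⊢
  rcases Nat.even_or_odd x' with he | ho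
  · exfalso
    rw [Nat.even_iff] at he
    have : (x' * u3) % 2 = 0 := by
      rw [Nat.mul_mod, he]
      simp
    omega
  · rwa [Nat.odd_iff] at ho

lemma s2_pow_mul (c o : ℕ) : s2 (2 ^ c * o) = s2 o := by
  induction c with
  | zero => simp
  | succ c ih => rw [pow_succ, mul_comm (2^c) 2, mul_assoc, s2_two_mul, ih]

lemma s2_pow_mul_sub_one {c o : ℕ} (ho : Odd o) (hpos : 0 < o) :
    s2 (2 ^ c * o - 1) = s2 (o - 1) + c := by
  induction c with
  | zero => simp
  | succ c ih =>
    have hx : 1 ≤ 2 ^ c * o := Nat.one_le_iff_ne_zero.mpr (by positivity)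
    have h2 : 2 ^ (c+1) * o = 2 * (2 ^ c * o) := by ring
    have h1 : 2 ^ (c+1) * o - 1 = 2 * (2 ^ c * o - 1) + 1 := by omega
    rw [h1, s2_two_mul_add_one, ih]
    omega

lemma trailing (m : ℕ) : s2 (m + 1) + padicValNat 2 (m + 1) = s2 m + 1 := by
  rcases Nat.exists_eq_two_pow_mul_odd (show m + 1 ≠ 0 by omega) with ⟨c, o, ho, hco⟩
  have hopos : 0 < o := by
    rcases ho with ⟨b, hb⟩; omega
  have hval : padicValNat 2 (m + 1) = c := by
    haveI : Fact (Nat.Prime 2) := ⟨Nat.prime_two⟩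
    rw [hco]
    rw [padicValNat.mul (by positivity) (by omega), padicValNat.prime_pow]
    have : padicValNat 2 o = 0 := padicValNat.eq_zero_of_not_dvd (by
      rw [Nat.two_dvd_ne_zero, ← Nat.odd_iff]; exact ho)
    omega
  rw [hval, hco]
  have hm : m = 2 ^ c * o - 1 := by omega
  rw [hm, s2_pow_mul, s2_pow_mul_sub_one ho hopos]
  rcases ho with ⟨b, hb⟩
  subst hb
  have h2 : 2 * b + 1 - 1 = 2 * b := by omega
  rw [h2, s2_two_mul, s2_two_mul_add_one]
  omega

/-- 2-adic valuation of factorial: m! = 2^(m - s2 m) * odd -/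
lemma factorial_eq (m : ℕ) : ∃ u, Odd u ∧ m.factorial = 2 ^ (m - s2 m) * u := by
  induction m with
  | zero => exact ⟨1, odd_one, by simp [s2_zero]⟩
  | succ m ih =>
    rcases ih with ⟨u, hu, hfac⟩
    rcases Nat.exists_eq_two_pow_mul_odd (show m + 1 ≠ 0 by omega) with ⟨c, o, ho, hco⟩
    haveI : Fact (Nat.Prime 2) := ⟨Nat.prime_two⟩
    have hopos : 0 < o := by rcases ho with ⟨b, hb⟩; omega
    have hval : padicValNat 2 (m + 1) = c := by
      rw [hco, padicValNat.mul (by positivity) (by omega), padicValNat.prime_pow]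
      have : padicValNat 2 o = 0 := padicValNat.eq_zero_of_not_dvd (by
        rw [Nat.two_dvd_ne_zero, ← Nat.odd_iff]; exact ho)
      omega
    have htr := trailing m
    rw [hval] at htr
    refine ⟨o * u, Odd.mul ho hu, ?_⟩
    have hs2m : s2 m ≤ m := s2_le m
    have hs2m1 : s2 (m+1) ≤ m + 1 := s2_le (m+1)
    have hexp : m + 1 - s2 (m+1) = c + (m - s2 m) := by omega
    rw [Nat.factorial_succ, hfac, hexp, pow_add, hco]
    ring



def St : ℕ → ℕ → ℕ
  | 0, 0 => 1
  | 0, _+1 => 0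
  | _+1, 0 => 0
  | i+1, r+1 => St i r + (r+1) * St i (r+1)

lemma St_zero_of_lt : ∀ {i r}, i < r → St i r = 0
  | 0, r+1, _ => rfl
  | i+1, r+1, h => by
    show St i r + (r+1) * St i (r+1) = 0
    rw [St_zero_of_lt (by omega : i < r), St_zero_of_lt (by omega : i < r+1), Nat.mul_zero]

lemma St_self : ∀ i, St i i = 1
  | 0 => rfl
  | i+1 => by
    show St i i + (i+1) * St i (i+1) = 1
    rw [St_self i, St_zero_of_lt (Nat.lt_succ_self i), Nat.mul_zero]

lemma mul_choose (j r : ℕ) : j * j.choose r = (r+1) * j.choose (r+1) + r * j.choose r := by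
  rcases le_or_gt r j with h | h
  · have := Nat.choose_succ_right_eq j r
    have h2 : j - r + r = j := by omega
    calc j * j.choose r = j.choose r * (j - r + r) := by rw [Nat.sub_add_cancel h]; ring
      _ = j.choose r * (j - r) + r * j.choose r := by ring
      _ = (r+1) * j.choose (r+1) + r * j.choose r := by rw [← this]; ring
  · rw [Nat.choose_eq_zero_of_lt h, Nat.choose_eq_zero_of_lt (by omega)]
    simp

lemma St_expand (i j : ℕ) :
    j ^ i = ∑ r ∈ range (i+1), St i r * r.factorial * j.choose r := by
  induction i with
  | zero => simp [St]
  | succ i ih =>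
    have step : j ^ (i+1) = ∑ r ∈ range (i+1), St i r * r.factorial * (j * j.choose r) := by
      rw [pow_succ, ih, Finset.sum_mul]
      apply Finset.sum_congr rfl
      intro r _
      ring
    rw [step]
    have key : ∀ r, St i r * r.factorial * (j * j.choose r)
        = St i r * (r+1).factorial * j.choose (r+1) + (r * St i r * r.factorial) * j.choose r := by
      intro r
      rw [mul_choose j r, Nat.factorial_succ]
      ring
    simp only [key]
    rw [Finset.sum_add_distrib]
    -- RHS target
    have hRHS : ∑ r ∈ range (i+2), St (i+1) r * r.factorial * j.choose r
        = ∑ r ∈ range (i+1), (St i r + (r+1) * St i (r+1)) * (r+1).factorial * j.choose (r+1) := by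
      rw [Finset.sum_range_succ']
      have h0 : St (i+1) 0 * Nat.factorial 0 * j.choose 0 = 0 := by
        have : St (i+1) 0 = 0 := by cases i <;> rfl
        rw [this]; ring
      rw [h0, Nat.add_zero]
      rfl
    rw [hRHS]
    have split : ∀ r, (St i r + (r+1) * St i (r+1)) * (r+1).factorial * j.choose (r+1)
        = St i r * (r+1).factorial * j.choose (r+1)
          + ((r+1) * St i (r+1) * (r+1).factorial) * j.choose (r+1) := by
      intro r; ring
    simp only [split]
    rw [Finset.sum_add_distrib]
    congr 1
    -- remaining: ∑ r ∈ range (i+1), r * St i r * r! * C(j,r) = ∑ r, (r+1) * St i (r+1) * (r+1)! * C(j,r+1)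
    have e1 : ∑ r ∈ range (i+2), (r * St i r * r.factorial) * j.choose r
        = ∑ r ∈ range (i+1), (r * St i r * r.factorial) * j.choose r := by
      rw [Finset.sum_range_succ, St_zero_of_lt (Nat.lt_succ_self i)]
      simp
    have e2 : ∑ r ∈ range (i+2), (r * St i r * r.factorial) * j.choose r
        = ∑ r ∈ range (i+1), ((r+1) * St i (r+1) * (r+1).factorial) * j.choose (r+1) := by
      rw [Finset.sum_range_succ']
      simp
    rw [← e1, e2]



def Wf (N r : ℕ) : ℕ := ∑ j ∈ range (N+1), N.choose (2*j+1) * j.choose r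
def Gf (N r : ℕ) : ℕ := ∑ j ∈ range (N+1), N.choose (2*j) * j.choose r

lemma W1 (N r : ℕ) : Wf (N+1) r = Gf N r + Wf N r := by
  unfold Wf Gf
  rw [Finset.sum_range_succ (n := N+1)]
  have hlast : (N+1).choose (2*(N+1)+1) * (N+1).choose r = 0 := by
    rw [Nat.choose_eq_zero_of_lt (by omega)]; ring
  rw [hlast, Nat.add_zero, ← Finset.sum_add_distrib]
  apply Finset.sum_congr rfl
  intro j _
  have : N.choose (2*j) + N.choose (2*j+1) = (N+1).choose (2*j+1) :=
    (Nat.choose_succ_succ N (2*j)).symm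
  rw [← this]; ring

lemma W2 (N r : ℕ) :
    Gf (N+1) r = (∑ j ∈ range (N+1), N.choose (2*j+1) * (j+1).choose r) + Gf N r := by
  have lhs : Gf (N+1) r
      = (∑ j ∈ range (N+1), (N+1).choose (2*j+2) * (j+1).choose r) + Nat.choose 0 r := by
    unfold Gf
    rw [Finset.sum_range_succ' (fun j => (N+1).choose (2*j) * j.choose r) (N+1)]
    simp only [Nat.mul_succ]
    norm_num
  have rhs : Gf N r
      = (∑ j ∈ range (N+1), N.choose (2*j+2) * (j+1).choose r) + Nat.choose 0 r := by
    unfold Gf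
    rw [Finset.sum_range_succ' (fun j => N.choose (2*j) * j.choose r) N]
    rw [Finset.sum_range_succ (fun j => N.choose (2*j+2) * (j+1).choose r) N]
    have hz : N.choose (2*N+2) * (N+1).choose r = 0 := by
      rw [Nat.choose_eq_zero_of_lt (by omega)]; ring
    rw [hz, Nat.add_zero]
    simp only [Nat.mul_succ]
    norm_num
  have key : ∀ j, (N+1).choose (2*j+2) * (j+1).choose r
      = N.choose (2*j+1) * (j+1).choose r + N.choose (2*j+2) * (j+1).choose r := by
    intro j
    rw [show (N+1).choose (2*j+2) = N.choose (2*j+1) + N.choose (2*j+2) from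
      Nat.choose_succ_succ N (2*j+1)]
    ring
  rw [lhs]
  simp only [key]
  rw [Finset.sum_add_distrib, rhs]
  omega

lemma W3succ (N r : ℕ) : Wf (N+2) (r+1) = 2 * Wf (N+1) (r+1) + Wf N r := by
  have e1 : Wf (N+2) (r+1) = Gf (N+1) (r+1) + Wf (N+1) (r+1) := W1 (N+1) (r+1)
  have e2 := W2 N (r+1)
  have e3 : ∑ j ∈ range (N+1), N.choose (2*j+1) * (j+1).choose (r+1)
      = Wf N r + Wf N (r+1) := by
    unfold Wf
    rw [← Finset.sum_add_distrib]
    apply Finset.sum_congr rfl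
    intro j _
    rw [Nat.choose_succ_succ j r]
    ring
  have e4 : Gf N (r+1) + Wf N (r+1) = Wf (N+1) (r+1) := (W1 N (r+1)).symm
  rw [e1, e2, e3]
  omega

lemma W3zero (N : ℕ) : Wf (N+2) 0 = 2 * Wf (N+1) 0 := by
  have e1 : Wf (N+2) 0 = Gf (N+1) 0 + Wf (N+1) 0 := W1 (N+1) 0
  have e2 := W2 N 0
  have e3 : ∑ j ∈ range (N+1), N.choose (2*j+1) * (j+1).choose 0 = Wf N 0 := by
    unfold Wf
    apply Finset.sum_congr rfl
    intro j _
    simp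
  have e4 : Gf N 0 + Wf N 0 = Wf (N+1) 0 := (W1 N 0).symm
  rw [e1, e2, e3]
  omega

lemma Wf_one (r : ℕ) : Wf 1 r = Nat.choose 0 r := by
  unfold Wf
  rw [show (1:ℕ)+1 = 2 by rfl, Finset.sum_range_succ, Finset.sum_range_one]
  have h1 : Nat.choose 1 3 = 0 := by decide
  norm_num [h1]

lemma Wf_two (r : ℕ) : Wf 2 r = 2 * Nat.choose 0 r := by
  unfold Wf
  rw [show (2:ℕ)+1 = 3 by rfl, Finset.sum_range_succ, Finset.sum_range_succ,
    Finset.sum_range_one]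
  have h1 : Nat.choose 2 3 = 0 := by decide
  have h2 : Nat.choose 2 5 = 0 := by decide
  norm_num [h1, h2]

lemma Wcl : ∀ N, 1 ≤ N → ∀ r, 2^(2*r+1) * Wf N r = 2^N * ((N-1-r).choose r) := by
  intro N
  induction N using Nat.strong_induction_on with
  | _ N ih =>
    match N with
    | 0 => intro h; omega
    | 1 =>
      intro _ r
      rw [Wf_one]
      rcases Nat.eq_zero_or_pos r with h | h
      · subst h; norm_num
      · rw [Nat.choose_eq_zero_of_lt (by omega), Nat.choose_eq_zero_of_lt (by omega)]
        ring
    | 2 =>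
      intro _ r
      rw [Wf_two]
      rcases Nat.eq_zero_or_pos r with h | h
      · subst h; norm_num
      · rw [Nat.choose_eq_zero_of_lt (by omega), Nat.choose_eq_zero_of_lt (by omega)]
        ring
    | (K+3) =>
      intro _ r
      have hW3z : Wf (K+3) 0 = 2 * Wf (K+2) 0 := by
        have := W3zero (K+1)
        have h1 : K+1+2 = K+3 := by omega
        have h2 : K+1+1 = K+2 := by omega
        rwa [h1, h2] at this
      have hW3s : ∀ r, Wf (K+3) (r+1) = 2 * Wf (K+2) (r+1) + Wf (K+1) r := by
        intro r
        have := W3succ (K+1) r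
        have h1 : K+1+2 = K+3 := by omega
        have h2 : K+1+1 = K+2 := by omega
        rwa [h1, h2] at this
      have ih2 := ih (K+2) (by omega) (by omega)
      have ih1 := ih (K+1) (by omega) (by omega)
      match r with
      | 0 =>
        rw [hW3z]
        have := ih2 0
        rw [show K+2-1-0 = K+1 by omega, Nat.choose_zero_right, Nat.mul_one] at this
        rw [show K+3-1-0 = K+2 by omega, Nat.choose_zero_right, Nat.mul_one]
        calc 2^(2*0+1) * (2 * Wf (K+2) 0) = 2 * (2^(2*0+1) * Wf (K+2) 0) := by ring
          _ = 2 * 2^(K+2) := by rw [this]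
          _ = 2^(K+3) := by rw [← pow_succ']
      | (r+1) =>
        rw [hW3s r]
        have i2 := ih2 (r+1)
        have i1 := ih1 r
        rw [show K+2-1-(r+1) = K-r by omega] at i2
        rw [show K+1-1-r = K-r by omega] at i1
        have lhs : 2^(2*(r+1)+1) * (2 * Wf (K+2) (r+1) + Wf (K+1) r)
            = 2 * (2^(2*(r+1)+1) * Wf (K+2) (r+1)) + 4 * (2^(2*r+1) * Wf (K+1) r) := by
          have : 2^(2*(r+1)+1) = 4 * 2^(2*r+1) := by
            rw [show 2*(r+1)+1 = (2*r+1)+2 by ring, pow_add]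
            ring
          rw [this]; ring
        rw [lhs, i2, i1]
        have goal_rhs : 2 * (2^(K+2) * (K-r).choose (r+1)) + 4 * (2^(K+1) * (K-r).choose r)
            = 2^(K+3) * ((K-r).choose (r+1) + (K-r).choose r) := by
          rw [show (2:ℕ)^(K+3) = 2 * 2^(K+2) by rw [← pow_succ']]
          rw [show (2:ℕ)^(K+2) = 2 * 2^(K+1) by rw [← pow_succ']]
          ring
        rw [goal_rhs]
        congr 1
        rw [show K+3-1-(r+1) = K+1-r by omega]
        rcases le_or_gt r K with h | h
        · rw [show K+1-r = (K-r)+1 by omega]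
          rw [Nat.choose_succ_succ (K-r) r]
          simp only [Nat.succ_eq_add_one]
          omega
        · rw [show K-r = 0 by omega, show K+1-r = 0 by omega]
          rw [Nat.choose_eq_zero_of_lt (show 0 < r+1 by omega),
            Nat.choose_eq_zero_of_lt (show 0 < r by omega)]

lemma Wf_zero_of_big {N r : ℕ} (h : N < 2*r+1) : Wf N r = 0 := by
  unfold Wf
  apply Finset.sum_eq_zero
  intro j _
  rcases le_or_gt (2*j+1) N with hj | hj
  · rw [Nat.choose_eq_zero_of_lt (show j < r by omega), Nat.mul_zero]
  · rw [Nat.choose_eq_zero_of_lt hj, Nat.zero_mul]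


lemma padicValNat_two_pow_mul {c o : ℕ} (ho : Odd o) : padicValNat 2 (2 ^ c * o) = c := by
  haveI : Fact (Nat.Prime 2) := ⟨Nat.prime_two⟩
  have hopos : 0 < o := by rcases ho with ⟨b, hb⟩; omega
  rw [padicValNat.mul (by positivity) (by omega), padicValNat.prime_pow]
  have : padicValNat 2 o = 0 := padicValNat.eq_zero_of_not_dvd (by
    rw [Nat.two_dvd_ne_zero, ← Nat.odd_iff]; exact ho)
  omega

lemma s2_pos {r : ℕ} (hr : 1 ≤ r) : 1 ≤ s2 r := by
  induction r using Nat.strong_induction_on with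
  | _ r ih =>
    rcases Nat.even_or_odd r with ⟨y, hy⟩ | ⟨y, hy⟩
    · subst hy
      rw [← two_mul, s2_two_mul]
      exact ih y (by omega) (by omega)
    · subst hy
      rw [s2_two_mul_add_one]
      omega

lemma s2_pow_sub_one (k : ℕ) : s2 (2 ^ k - 1) = k := by
  induction k with
  | zero => simp [s2_zero]
  | succ k ih =>
    have h : 2 ^ (k+1) - 1 = 2 * (2 ^ k - 1) + 1 := by
      have : 1 ≤ 2 ^ k := Nat.one_le_two_pow
      have : 2 ^ (k+1) = 2 * 2 ^ k := by rw [pow_succ]; ring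
      omega
    rw [h, s2_two_mul_add_one, ih]

lemma val_le_log {t : ℕ} (ht : 1 ≤ t) : padicValNat 2 t ≤ Nat.log 2 t := by
  have h1 : 2 ^ (padicValNat 2 t) ≤ t := Nat.le_of_dvd (by omega) pow_padicValNat_dvd
  exact (Nat.le_log_iff_pow_le (by norm_num) (by omega)).mpr h1

lemma log_lt_of_lt_pow {x m : ℕ} (hx : 1 ≤ x) (h : x < 2 ^ m) : Nat.log 2 x < m := by
  by_contra hc
  push_neg at hc
  have := (Nat.le_log_iff_pow_le (by norm_num : (1:ℕ) < 2) (by omega : x ≠ 0)).mp hc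
  have h2 : 2 ^ m ≤ 2 ^ Nat.log 2 x := Nat.pow_le_pow_right (by norm_num) hc
  have h3 : 2 ^ Nat.log 2 x ≤ x := Nat.pow_log_le_self 2 (by omega)
  omega

lemma mono_ilg {r i : ℕ} (hr : 1 ≤ r) (hri : r ≤ i) : r + Nat.log 2 i ≤ i + Nat.log 2 r := by
  induction i with
  | zero => omega
  | succ i ih =>
    rcases Nat.lt_or_ge i r with h | h
    · have hreq : r = i + 1 := by omega
      subst hreq
      omega
    · have hstep : Nat.log 2 (i+1) ≤ Nat.log 2 i + 1 := by
        have h2 : Nat.log 2 (i+1) ≤ Nat.log 2 (i*2) := Nat.log_mono_right (by omega)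
        rw [Nat.log_mul_base (by norm_num) (by omega)] at h2
        exact h2
      have := ih h
      omega

/-- 2-adic valuation of a binomial coefficient via digit sums -/
lemma choose_val {m k : ℕ} (h : k ≤ m) :
    ∃ w u, Odd u ∧ m.choose k = 2 ^ w * u
      ∧ w + ((k - s2 k) + ((m - k) - s2 (m - k))) = m - s2 m := by
  obtain ⟨uk, huk, hk⟩ := factorial_eq k
  obtain ⟨umk, humk, hmk⟩ := factorial_eq (m - k)
  obtain ⟨um, hum, hm⟩ := factorial_eq m
  have key : m.choose k * k.factorial * (m-k).factorial = m.factorial :=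
    Nat.choose_mul_factorial_mul_factorial h
  rw [hk, hmk, hm] at key
  have key2 : m.choose k * (uk * umk) * 2 ^ ((k - s2 k) + ((m-k) - s2 (m-k)))
      = 2 ^ (m - s2 m) * um := by
    rw [← key, pow_add]; ring
  have hle : (k - s2 k) + ((m-k) - s2 (m-k)) ≤ m - s2 m := by
    apply le_of_pow_dvd_pow_mul_odd hum
    rw [← key2]
    exact dvd_mul_left _ _
  set A := (k - s2 k) + ((m-k) - s2 (m-k)) with hA
  have key3 : m.choose k * (uk * umk) = 2 ^ ((m - s2 m) - A) * um := by
    have hpow : (2:ℕ) ^ (m - s2 m) = 2 ^ A * 2 ^ ((m - s2 m) - A) := by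
      rw [← pow_add]
      congr 1
      omega
    have h2A : 0 < 2 ^ A := Nat.pow_pos (by norm_num)
    apply Nat.eq_of_mul_eq_mul_left h2A
    calc 2 ^ A * (m.choose k * (uk * umk)) = m.choose k * (uk * umk) * 2 ^ A := by ring
      _ = 2 ^ (m - s2 m) * um := key2
      _ = 2 ^ A * (2 ^ ((m - s2 m) - A) * um) := by rw [hpow]; ring
  obtain ⟨u, hu, hcu⟩ := odd_cancel (Odd.mul huk humk) hum key3
  exact ⟨(m - s2 m) - A, u, hu, hcu, by omega⟩

/-- `ν(n) ≤ ν(C(n,t)) + ν(t)` -/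
lemma val_choose_lb {n t : ℕ} (ht : 1 ≤ t) (htn : t ≤ n) :
    padicValNat 2 n ≤ padicValNat 2 (n.choose t) + padicValNat 2 t := by
  haveI : Fact (Nat.Prime 2) := ⟨Nat.prime_two⟩
  have hid : n * (n-1).choose (t-1) = n.choose t * t := by
    have := Nat.add_one_mul_choose_eq (n-1) (t-1)
    rw [show n - 1 + 1 = n by omega, show t - 1 + 1 = t by omega] at this
    exact this
  have h1 : 0 < (n-1).choose (t-1) := Nat.choose_pos (by omega)
  have h2 : 0 < n.choose t := Nat.choose_pos htn
  have hval := congrArg (padicValNat 2) hid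
  rw [padicValNat.mul (by omega) (by omega), padicValNat.mul (by omega) (by omega)] at hval
  omega

/-- valuation of descending factorial of `n = 2^a * n'` -/
lemma desc_val {a n' L : ℕ} (hn' : Odd n') (hL : L ≤ a) :
    ∀ m, 1 ≤ m → m ≤ 2 ^ L →
      ∃ u, Odd u ∧ (2^a * n').descFactorial m = 2 ^ (a + ((m-1) - s2 (m-1))) * u := by
  intro m
  induction m with
  | zero => omega
  | succ m ih =>
    intro _ hm
    rcases Nat.eq_zero_or_pos m with hm0 | hm0
    · subst hm0
      refine ⟨n', hn', ?_⟩
      simp [Nat.descFactorial_one, s2_zero]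
    · obtain ⟨u, hu, hdesc⟩ := ih (by omega) (by omega)
      obtain ⟨c, o, ho, hco⟩ := Nat.exists_eq_two_pow_mul_odd (show m ≠ 0 by omega)
      have hopos : 0 < o := by rcases ho with ⟨b, hb⟩; omega
      have hcm : 2 ^ c ≤ m := by
        calc 2 ^ c ≤ 2 ^ c * o := Nat.le_mul_of_pos_right _ hopos
          _ = m := hco.symm
      have hcL : c < L := by
        by_contra hc
        push_neg at hc
        have : 2 ^ L ≤ 2 ^ c := Nat.pow_le_pow_right (by norm_num) hc
        omega
      have hca : c < a := by omega
      have hnn : 0 < n' := by rcases hn' with ⟨b, hb⟩; omega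
      have hmn : m < 2 ^ a * n' := by
        have h1 : m < 2 ^ L := by omega
        have h2 : 2 ^ L ≤ 2 ^ a := Nat.pow_le_pow_right (by norm_num) hL
        have h3 : 2 ^ a ≤ 2 ^ a * n' := Nat.le_mul_of_pos_right _ hnn
        omega
      -- n - m = 2^c * (2^(a-c) * n' - o), odd inner
      have hsplit : 2 ^ a * n' - m = 2 ^ c * (2 ^ (a-c) * n' - o) := by
        have h1 : 2 ^ c * 2 ^ (a-c) = 2 ^ a := by
          rw [← pow_add]
          congr 1
          omega
        have h2 : 2 ^ c * (2 ^ (a-c) * n') = 2 ^ a * n' := by rw [← mul_assoc, h1]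
        rw [Nat.mul_sub, h2, hco]
      have hinner_odd : Odd (2 ^ (a-c) * n' - o) := by
        apply Nat.Even.sub_odd _ _ ho
        · have : o * 2 ^ c ≤ (2 ^ (a-c) * n') * 2 ^ c := by
            calc o * 2 ^ c = m := by rw [mul_comm]; exact hco.symm
              _ ≤ 2 ^ a * n' := le_of_lt hmn
              _ = (2 ^ (a-c) * n') * 2 ^ c := by
                  rw [mul_comm (2 ^ (a-c)) n', mul_assoc, ← pow_add]
                  rw [show a - c + c = a by omega]
                  ring
          exact Nat.le_of_mul_le_mul_right this (Nat.pow_pos (by norm_num))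
        · have hac : 1 ≤ a - c := by omega
          rcases Nat.exists_eq_add_of_le hac with ⟨d, hd⟩
          rw [show a - c = 1 + d by omega, pow_add, pow_one]
          exact ⟨2 ^ d * n', by ring⟩
      have hvm : padicValNat 2 m = c := by rw [hco]; exact padicValNat_two_pow_mul ho
      have htr := trailing (m - 1)
      rw [show m - 1 + 1 = m by omega, hvm] at htr
      refine ⟨(2 ^ (a-c) * n' - o) * u, Odd.mul hinner_odd hu, ?_⟩
      rw [Nat.descFactorial_succ, hsplit, hdesc]
      have hs2m : s2 m ≤ m := s2_le m
      have hs2m1 : s2 (m-1) ≤ m - 1 := s2_le (m-1)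
      have hexp : a + ((m+1-1) - s2 (m+1-1)) = c + (a + ((m-1) - s2 (m-1))) := by
        rw [show m + 1 - 1 = m by omega]
        omega
      rw [hexp, pow_add]
      ring

/-- exact valuation of C(n, 2^(e-1)) -/
lemma choose_nR {e a n' : ℕ} (hn' : Odd n') (he : 2 ≤ e) (ha : e - 1 ≤ a) :
    ∃ u, Odd u ∧ (2^a * n').choose (2^(e-1)) = 2 ^ (a + 1 - e) * u := by
  obtain ⟨u, hu, hdesc⟩ := desc_val hn' ha (2^(e-1)) Nat.one_le_two_pow le_rfl
  obtain ⟨u2, hu2, hfac⟩ := factorial_eq (2^(e-1))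
  rw [Nat.descFactorial_eq_factorial_mul_choose, hfac] at hdesc
  have hs2R : s2 (2^(e-1)) = 1 := s2_pow (e-1)
  have hs2R1 : s2 (2^(e-1) - 1) = e - 1 := s2_pow_sub_one (e-1)
  rw [hs2R, hs2R1] at hdesc
  have heR : e - 1 < 2^(e-1) := Nat.lt_two_pow_self (n := e-1)
  have hexp : a + (2^(e-1) - 1 - (e-1)) = (2^(e-1) - 1) + (a + 1 - e) := by omega
  rw [hexp, pow_add] at hdesc
  have key : (2^a * n').choose (2^(e-1)) * u2 * 2 ^ (2^(e-1) - 1)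
      = 2 ^ (2^(e-1) - 1) * (2 ^ (a + 1 - e) * u) := by
    calc (2^a * n').choose (2^(e-1)) * u2 * 2 ^ (2^(e-1) - 1)
        = 2 ^ (2^(e-1) - 1) * u2 * (2^a * n').choose (2^(e-1)) := by ring
      _ = 2 ^ (2^(e-1) - 1) * 2 ^ (a + 1 - e) * u := hdesc
      _ = 2 ^ (2^(e-1) - 1) * (2 ^ (a + 1 - e) * u) := by ring
  have key2 : (2^a * n').choose (2^(e-1)) * u2 = 2 ^ (a + 1 - e) * u := by
    have hpos : 0 < 2 ^ (2^(e-1) - 1) := Nat.pow_pos (by norm_num)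
    apply Nat.eq_of_mul_eq_mul_left hpos
    calc 2 ^ (2^(e-1) - 1) * ((2^a * n').choose (2^(e-1)) * u2)
        = (2^a * n').choose (2^(e-1)) * u2 * 2 ^ (2^(e-1) - 1) := by ring
      _ = 2 ^ (2^(e-1) - 1) * (2 ^ (a + 1 - e) * u) := key
  exact odd_cancel hu2 hu key2

/-- The master arithmetic inequality for non-top terms -/
lemma NI {e δ a r i t cnt vt vC : ℕ} (he : 2 ≤ e) (hδ : δ = 1 ∨ δ = 2)
    (ha : e - 1 ≤ a) (hr1 : 1 ≤ r) (hrR : r ≤ 2^(e-1)) (hri : r ≤ i)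
    (ht1 : 1 ≤ t) (hti : t ≤ i)
    (hnot : ¬(r = 2^(e-1) ∧ i = 2^(e-1) ∧ t = 2^(e-1)))
    (hcnt : a ≤ cnt + vt) (hvt : vt ≤ Nat.log 2 t)
    (hvC : vC + ((r - s2 r) + ((2^e+δ-1-2*r) - s2 (2^e+δ-1-2*r)))
         = (2^e+δ-1-r) - s2 (2^e+δ-1-r)) :
    2^e + (a + δ) ≤ cnt + i + (r - s2 r) + (2^e+δ-1-2*r) + vC + e := by
  have hp : 2^(e-1) * 2 = 2^e := by
    rw [← pow_succ]
    congr 1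
    omega
  have heR : e - 1 < 2^(e-1) := Nat.lt_two_pow_self (n := e-1)
  have hs2r_le : s2 r ≤ r := s2_le r
  have hs2r_pos : 1 ≤ s2 r := s2_pos hr1
  have hlog_ti : Nat.log 2 t ≤ Nat.log 2 i := Nat.log_mono_right hti
  by_cases hrR' : r = 2^(e-1)
  · -- case r = R
    subst hrR'
    set R := 2^(e-1) with hRdef
    have hs2R : s2 R = 1 := s2_pow (e-1)
    have hvC0 : vC = 0 := by
      rcases hδ with h1 | h1 <;> subst h1
      · have e1 : 2^e+1-1-2*R = 0 := by omega
        have e2 : 2^e+1-1-R = R := by omega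
        rw [e1, e2, s2_zero, hs2R] at hvC
        omega
      · have e1 : 2^e+2-1-2*R = 1 := by omega
        have e2 : 2^e+2-1-R = R+1 := by omega
        have hs2R1 : s2 (R+1) = 2 := by
          rw [hRdef, s2_pow_add (show 1 < 2^(e-1) by omega), s2_one]
        rw [e1, e2, s2_one, hs2R, hs2R1] at hvC
        omega
    rcases Nat.lt_or_ge i (R+1) with hiR | hiR
    · -- i = R, t < R
      have hiR' : i = R := by omega
      have htR : t < R := by
        by_contra hc
        push_neg at hc
        exact hnot ⟨rfl, hiR', by omega⟩
      have hlt : Nat.log 2 t ≤ e - 2 := by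
        have h2 : Nat.log 2 t < e - 1 := by
          apply log_lt_of_lt_pow ht1
          omega
        omega
      rcases hδ with h1 | h1 <;> subst h1 <;> omega
    · -- i ≥ R + 1
      have hmono := mono_ilg (show 1 ≤ R + 1 by omega) hiR
      have hlR1 : Nat.log 2 (R+1) = e - 1 := by
        apply Nat.log_eq_of_pow_le_of_lt_pow
        · rw [hRdef]; omega
        · rw [show e - 1 + 1 = e by omega]
          omega
      rw [hlR1] at hmono
      rcases hδ with h1 | h1 <;> subst h1 <;> omega
  · -- case r < R
    have hrR2 : r < 2^(e-1) := by omega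
    have hlgr : Nat.log 2 r ≤ e - 2 := by
      have h2 : Nat.log 2 r < e - 1 := log_lt_of_lt_pow hr1 hrR2
      omega
    have hmono := mono_ilg hr1 hri
    have hs2A : s2 (2^e+δ-1-r) ≤ s2 (2^e+δ-1-2*r) + 1 := by
      rcases hδ with h1 | h1 <;> subst h1
      · have e1 : 2^e+1-1-r = 2^(e-1) + (2^(e-1) - r) := by omega
        have e2 : 2^e+1-1-2*r = 2 * (2^(e-1) - r) := by omega
        rw [e1, e2, s2_pow_add (show 2^(e-1) - r < 2^(e-1) by omega), s2_two_mul]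
        omega
      · rcases Nat.lt_or_ge r 2 with hr2 | hr2
        · have hr1' : r = 1 := by omega
          subst hr1'
          have e1 : 2^e+2-1-1 = 2^e := by omega
          rw [e1, s2_pow]
          omega
        · have e1 : 2^e+2-1-r = 2^(e-1) + ((2^(e-1) - r) + 1) := by omega
          have e2 : 2^e+2-1-2*r = 2 * (2^(e-1) - r) + 1 := by omega
          rw [e1, e2, s2_pow_add (show (2^(e-1) - r) + 1 < 2^(e-1) by omega),
            s2_two_mul_add_one]
          have := s2_succ_le (2^(e-1) - r)
          omega
    have hs2b : s2 (2^e+δ-1-2*r) ≤ 2^e+δ-1-2*r := s2_le _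
    have hs2c : s2 (2^e+δ-1-r) ≤ 2^e+δ-1-r := s2_le _
    rcases hδ with h1 | h1 <;> subst h1 <;> omega

/-- Vandermonde tail: `C(P+n, i) = C(P, i) + VD n P i` -/
def VD (n P i : ℕ) : ℕ := ∑ t ∈ range i, n.choose (t+1) * P.choose (i - (t+1))

lemma vand (n P i : ℕ) : (P + n).choose i = P.choose i + VD n P i := by
  rw [show P + n = n + P by ring, Nat.add_choose_eq]
  rw [Finset.Nat.sum_antidiagonal_eq_sum_range_succ (fun t s => n.choose t * P.choose s) i]
  rw [Finset.sum_range_succ' (fun t => n.choose t * P.choose (i - t)) i]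
  unfold VD
  have h0 : n.choose 0 * P.choose (i - 0) = P.choose i := by simp
  rw [h0, Nat.add_comm]

/-- coefficient aggregate -/
def Dc (n P r : ℕ) : ℕ := ∑ i ∈ range (P+n+1), VD n P i * 2^i * St i r * r.factorial

lemma pow_odd_expand (P m j : ℕ) :
    (2*j+1) ^ m = ∑ i ∈ range (m+1), m.choose i * (2^i * j^i) := by
  have := add_pow (2*j : ℕ) 1 m
  rw [this]
  apply Finset.sum_congr rfl
  intro i _
  rw [one_pow, mul_pow]
  push_cast
  ring

lemma per_j (n P j : ℕ) (hn : 1 ≤ n) :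
    (2*j+1) ^ (P + n)
      = (2*j+1) ^ P + ∑ i ∈ range (P+n+1), VD n P i * 2^i * j^i := by
  rw [pow_odd_expand (P+n) (P+n) j]
  have hP : (2*j+1) ^ P = ∑ i ∈ range (P+n+1), P.choose i * (2^i * j^i) := by
    rw [pow_odd_expand P P j]
    apply Finset.sum_subset
    · apply Finset.range_subset_range.mpr; omega
    · intro i _ hi
      rw [Nat.choose_eq_zero_of_lt (by simp at hi; omega)]
      ring
  rw [hP, ← Finset.sum_add_distrib]
  apply Finset.sum_congr rfl
  intro i _
  rw [vand n P i]
  ring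

/-- The central decomposition -/
lemma decomp (N n P : ℕ) (hn : 1 ≤ n) :
    ∑ j ∈ range (N+1), N.choose (2*j+1) * (2*j+1) ^ (P + n)
      = ∑ j ∈ range (N+1), N.choose (2*j+1) * (2*j+1) ^ P
        + ∑ r ∈ range (P+n+1), Dc n P r * Wf N r := by
  have step1 : ∀ j, N.choose (2*j+1) * (2*j+1) ^ (P + n)
      = N.choose (2*j+1) * (2*j+1) ^ P
        + ∑ i ∈ range (P+n+1), N.choose (2*j+1) * (VD n P i * 2^i * j^i) := by
    intro j
    rw [per_j n P j hn, Nat.mul_add, Finset.mul_sum]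
  simp only [step1]
  rw [Finset.sum_add_distrib]
  congr 1
  -- Fubini: ∑_j ∑_i c_j VD_i 2^i j^i = ∑_r Dc_r Wf_r
  have inner : ∀ j, (∑ i ∈ range (P+n+1), N.choose (2*j+1) * (VD n P i * 2^i * j^i))
      = ∑ i ∈ range (P+n+1), ∑ r ∈ range (P+n+1),
          N.choose (2*j+1) * (VD n P i * 2^i * St i r * r.factorial * j.choose r) := by
    intro j
    apply Finset.sum_congr rfl
    intro i hi
    have hiP : i < P+n+1 := Finset.mem_range.mp hi
    have hji : (j:ℕ)^i = ∑ r ∈ range (P+n+1), St i r * r.factorial * j.choose r := by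
      rw [St_expand i j]
      apply Finset.sum_subset
      · exact Finset.range_subset_range.mpr (by omega)
      · intro r _ hr
        rw [St_zero_of_lt (by simp at hr; omega)]
        ring
    calc N.choose (2*j+1) * (VD n P i * 2^i * j^i)
        = VD n P i * 2^i * N.choose (2*j+1) * j^i := by ring
      _ = VD n P i * 2^i * N.choose (2*j+1)
            * (∑ r ∈ range (P+n+1), St i r * r.factorial * j.choose r) := by rw [hji]
      _ = ∑ r ∈ range (P+n+1),
            N.choose (2*j+1) * (VD n P i * 2^i * St i r * r.factorial * j.choose r) := by
          rw [Finset.mul_sum]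
          apply Finset.sum_congr rfl
          intro r _
          ring
  simp only [inner]
  calc (∑ j ∈ range (N+1), ∑ i ∈ range (P+n+1), ∑ r ∈ range (P+n+1),
          N.choose (2*j+1) * (VD n P i * 2^i * St i r * r.factorial * j.choose r))
      = ∑ i ∈ range (P+n+1), ∑ j ∈ range (N+1), ∑ r ∈ range (P+n+1),
          N.choose (2*j+1) * (VD n P i * 2^i * St i r * r.factorial * j.choose r) :=
        Finset.sum_comm
    _ = ∑ i ∈ range (P+n+1), ∑ r ∈ range (P+n+1), ∑ j ∈ range (N+1),
          N.choose (2*j+1) * (VD n P i * 2^i * St i r * r.factorial * j.choose r) := by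
        apply Finset.sum_congr rfl
        intro i _
        exact Finset.sum_comm
    _ = ∑ r ∈ range (P+n+1), ∑ i ∈ range (P+n+1), ∑ j ∈ range (N+1),
          N.choose (2*j+1) * (VD n P i * 2^i * St i r * r.factorial * j.choose r) :=
        Finset.sum_comm
    _ = ∑ r ∈ range (P+n+1), Dc n P r * Wf N r := by
        apply Finset.sum_congr rfl
        intro r _
        unfold Dc Wf
        rw [Finset.sum_mul]
        apply Finset.sum_congr rfl
        intro i _
        rw [Finset.mul_sum]
        apply Finset.sum_congr rfl
        intro j _
        ring

lemma St_succ_zero (i : ℕ) : St (i+1) 0 = 0 := by cases i <;> rfl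

lemma val_decomp {m : ℕ} (hm : 0 < m) : ∃ u, Odd u ∧ m = 2 ^ (padicValNat 2 m) * u := by
  haveI : Fact (Nat.Prime 2) := ⟨Nat.prime_two⟩
  obtain ⟨u, hu⟩ := pow_padicValNat_dvd (p := 2) (n := m)
  refine ⟨u, ?_, hu⟩
  rw [Nat.odd_iff]
  by_contra hc
  have : 2 ∣ u := by omega
  rcases this with ⟨u', hu'⟩
  have hdd : 2 ^ (padicValNat 2 m + 1) ∣ m := by
    refine ⟨u', ?_⟩
    calc m = 2 ^ padicValNat 2 m * u := hu
      _ = 2 ^ (padicValNat 2 m + 1) * u' := by rw [hu', pow_succ]; ring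
  exact pow_succ_padicValNat_not_dvd (by omega) hdd

lemma Wf_extract {N r : ℕ} (h : 2*r+1 ≤ N) :
    Wf N r = 2 ^ (N - 1 - 2*r) * (N - 1 - r).choose r := by
  have hN : 1 ≤ N := by omega
  have hthis := Wcl N hN r
  have hP : (2:ℕ)^N = 2^(2*r+1) * 2^(N-1-2*r) := by
    rw [← pow_add]
    congr 1
    omega
  rw [hP, mul_assoc] at hthis
  exact Nat.eq_of_mul_eq_mul_left (Nat.pow_pos (by norm_num)) hthis

lemma sum_split {M x0 T : ℕ} (F : ℕ → ℕ) (hx0 : x0 ∈ range M)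
    (hdvd : ∀ x ∈ range M, x ≠ x0 → 2^(T+1) ∣ F x)
    (htop : ∃ u, Odd u ∧ F x0 = 2^T * u) :
    ∃ u, Odd u ∧ ∑ x ∈ range M, F x = 2^T * u := by
  obtain ⟨u, hu, htop⟩ := htop
  have hsum : (∑ x ∈ (range M).erase x0, F x) + F x0 = ∑ x ∈ range M, F x :=
    Finset.sum_erase_add _ _ hx0
  have hdvd2 : 2^(T+1) ∣ ∑ x ∈ (range M).erase x0, F x := by
    apply Finset.dvd_sum
    intro x hx
    exact hdvd x (Finset.mem_of_mem_erase hx) (Finset.ne_of_mem_erase hx)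
  rcases hdvd2 with ⟨w, hw⟩
  refine ⟨2*w + u, ?_, ?_⟩
  · rcases hu with ⟨b, hb⟩
    exact ⟨2*w/2 + b, by omega⟩
  · rw [← hsum, hw, htop, pow_succ]
    ring

section Main
variable {e δ a n' : ℕ}

/-- the top-term valuation T -/
def Tv (e δ a : ℕ) : ℕ := 2^e - e + (a + δ - 1)

lemma elementary_dvd (he : 2 ≤ e) (hδ : δ = 1 ∨ δ = 2) (hn' : Odd n') (ha : e - 1 ≤ a)
    (P : ℕ) {r i t : ℕ} (hr1 : 1 ≤ r) (hrR : r ≤ 2^(e-1)) (hri : r ≤ i) (hti : t + 1 ≤ i)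
    (hnot : ¬(r = 2^(e-1) ∧ i = 2^(e-1) ∧ t + 1 = 2^(e-1))) :
    2^(Tv e δ a + 1) ∣ (2^a*n').choose (t+1) * P.choose (i-(t+1)) * 2^i * St i r
      * r.factorial * Wf (2^e+δ) r := by
  set n := 2^a*n' with hndef
  set N := 2^e+δ with hNdef
  rcases Nat.lt_or_ge n (t+1) with htn | htn
  · rw [Nat.choose_eq_zero_of_lt htn]
    simp
  -- decompositions
  have hnpos : 0 < n := by
    have : 0 < n' := by rcases hn' with ⟨b, hb⟩; omega
    positivity
  have hvn : padicValNat 2 n = a := padicValNat_two_pow_mul hn'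
  have hcnt : a ≤ padicValNat 2 (n.choose (t+1)) + padicValNat 2 (t+1) := by
    rw [← hvn]
    exact val_choose_lb (by omega) htn
  have hvt : padicValNat 2 (t+1) ≤ Nat.log 2 (t+1) := val_le_log (by omega)
  have hlog : Nat.log 2 (t+1) ≤ Nat.log 2 i := Nat.log_mono_right hti
  obtain ⟨u1, hu1, hd1⟩ := val_decomp (Nat.choose_pos htn)
  set c1 := padicValNat 2 (n.choose (t+1)) with hc1def
  obtain ⟨u2, hu2, hd2⟩ := factorial_eq r
  have hrN : 2*r+1 ≤ N := by
    have h2 : 2^(e-1)*2 = 2^e := by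
      rw [← pow_succ]; congr 1; omega
    omega
  have hWf : Wf N r = 2 ^ (N - 1 - 2*r) * (N - 1 - r).choose r := Wf_extract hrN
  obtain ⟨w, u3, hu3, hd3, hw⟩ := choose_val (show r ≤ N - 1 - r by omega)
  rw [show N - 1 - r - r = N - 1 - 2*r by omega] at hw
  -- assemble
  have key : n.choose (t+1) * P.choose (i-(t+1)) * 2^i * St i r * r.factorial * Wf N r
      = 2 ^ (c1 + i + (r - s2 r) + (N - 1 - 2*r) + w)
        * (u1 * P.choose (i-(t+1)) * St i r * u2 * u3) := by
    rw [hd1, hd2, hWf, hd3]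
    rw [pow_add, pow_add, pow_add, pow_add]
    ring
  rw [key]
  apply Dvd.dvd.mul_right
  apply pow_dvd_pow
  have hNI := NI (a := a) (vt := padicValNat 2 (t+1))
    (cnt := c1) (vC := w)
    he hδ ha hr1 hrR hri (by omega : 1 ≤ t+1) hti hnot hcnt
    hvt (by rw [hNdef] at hw; omega)
  have hTv : Tv e δ a + 1 + e = 2^e + (a + δ) := by
    unfold Tv
    have : e < 2^e := Nat.lt_two_pow_self (n := e)
    omega
  rw [hNdef]
  omega

lemma top_exact (he : 2 ≤ e) (hδ : δ = 1 ∨ δ = 2) (hn' : Odd n') (ha : e - 1 ≤ a) (P : ℕ) :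
    ∃ u, Odd u ∧ (2^a*n').choose (2^(e-1)) * P.choose 0 * 2^(2^(e-1)) * St (2^(e-1)) (2^(e-1))
      * (2^(e-1)).factorial * Wf (2^e+δ) (2^(e-1)) = 2^(Tv e δ a) * u := by
  set R := 2^(e-1) with hRdef
  have hp : 2^(e-1)*2 = 2^e := by
    rw [← pow_succ]; congr 1; omega
  obtain ⟨u1, hu1, hd1⟩ := choose_nR hn' he ha
  obtain ⟨u2, hu2, hd2⟩ := factorial_eq R
  rw [show R - s2 R = R - 1 by rw [hRdef, s2_pow]] at hd2
  have hWf : ∃ u3, Odd u3 ∧ Wf (2^e+δ) R = 2^(δ-1) * u3 := by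
    rcases hδ with h1 | h1 <;> subst h1
    · refine ⟨1, odd_one, ?_⟩
      have := Wf_extract (show 2*R+1 ≤ 2^e+1 by omega)
      rw [show 2^e+1-1-2*R = 0 by omega, show 2^e+1-1-R = R by omega,
        Nat.choose_self] at this
      simpa using this
    · refine ⟨R+1, ?_, ?_⟩
      · rw [Nat.odd_iff]
        have : R % 2 = 0 := by
          rcases Nat.exists_eq_add_of_le he with ⟨d, hd⟩
          rw [hRdef, show e - 1 = d + 1 by omega, pow_succ]
          omega
        omega
      · have := Wf_extract (show 2*R+1 ≤ 2^e+2 by omega)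
        rw [show 2^e+2-1-2*R = 1 by omega, show 2^e+2-1-R = R+1 by omega,
          Nat.choose_succ_self_right] at this
        simpa using this
  obtain ⟨u3, hu3, hd3⟩ := hWf
  refine ⟨u1 * u2 * u3, by exact Odd.mul (Odd.mul hu1 hu2) hu3, ?_⟩
  rw [hd1, hd2, hd3, St_self, Nat.choose_zero_right]
  have hexp : Tv e δ a = (a + 1 - e) + R + (R - 1) + (δ - 1) := by
    unfold Tv
    have h1 : e < 2^e := Nat.lt_two_pow_self (n := e)
    have h2 : e - 1 < 2^(e-1) := Nat.lt_two_pow_self (n := e-1)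
    rcases hδ with h | h <;> omega
  rw [hexp, pow_add, pow_add, pow_add]
  ring

/-- Main valuation theorem for the integer sum -/
lemma ZN_val (he : 2 ≤ e) (hδ : δ = 1 ∨ δ = 2) (hn' : Odd n') (ha : e - 1 ≤ a) (P : ℕ) :
    ∃ u, Odd u ∧
      (∑ r ∈ range (P + 2^a*n' + 1), Dc (2^a*n') P r * Wf (2^e+δ) r)
        = 2 ^ (Tv e δ a) * u := by
  set n := 2^a*n' with hndef
  set N := 2^e+δ with hNdef
  set R := 2^(e-1) with hRdef
  have hp : 2^(e-1)*2 = 2^e := by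
    rw [← pow_succ]; congr 1; omega
  have hn'pos : 0 < n' := by rcases hn' with ⟨b, hb⟩; omega
  have hRn : R ≤ n := by
    have h1 : 2^(e-1) ≤ 2^a := Nat.pow_le_pow_right (by norm_num) (by omega)
    calc R ≤ 2^a := h1
      _ ≤ 2^a * n' := Nat.le_mul_of_pos_right _ hn'pos
  -- level r
  apply sum_split _ (show R ∈ range (P + n + 1) by simp; omega)
  · -- r ≠ R : divисibility
    intro r hrange hrR
    match r, hrR with
    | 0, _ =>
      have hDc0 : Dc n P 0 = 0 := by
        unfold Dc
        apply Finset.sum_eq_zero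
        intro i _
        match i with
        | 0 => unfold VD; simp
        | (i+1) => rw [St_succ_zero]; ring
      rw [hDc0]
      simp
    | (r+1), hrR =>
      rcases Nat.lt_or_ge R (r+1) with hbig | hsmall
      · have hWf0 : Wf N (r+1) = 0 := by
          apply Wf_zero_of_big
          rcases hδ with h | h <;> omega
        rw [hWf0]
        simp
      · -- 1 ≤ r+1 ≤ R, r+1 ≠ R
        unfold Dc
        rw [Finset.sum_mul]
        apply Finset.dvd_sum
        intro i _
        unfold VD
        rw [Finset.sum_mul, Finset.sum_mul, Finset.sum_mul, Finset.sum_mul]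
        apply Finset.dvd_sum
        intro t ht
        have hti : t + 1 ≤ i := Finset.mem_range.mp ht
        rcases Nat.lt_or_ge i (r+1) with hir | hir
        · rw [St_zero_of_lt hir]
          simpa using dvd_zero _
        · exact elementary_dvd he hδ hn' ha P (by omega) hsmall hir hti
            (by intro ⟨h1, _, _⟩; exact hrR h1)
  · -- top level r = R
    have hDcR : Dc n P R * Wf N R
        = ∑ i ∈ range (P + n + 1),
            (∑ t ∈ range i, n.choose (t+1) * P.choose (i-(t+1)) * 2^i * St i R
              * R.factorial * Wf N R) := by
      unfold Dc VD
      rw [Finset.sum_mul]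
      apply Finset.sum_congr rfl
      intro i _
      rw [Finset.sum_mul, Finset.sum_mul, Finset.sum_mul, Finset.sum_mul]
    rw [hDcR]
    -- level i
    apply sum_split _ (show R ∈ range (P + n + 1) by simp; omega)
    · intro i hirange hiR
      apply Finset.dvd_sum
      intro t ht
      have hti : t + 1 ≤ i := Finset.mem_range.mp ht
      rcases Nat.lt_or_ge i R with hir | hir
      · rw [St_zero_of_lt hir]
        simpa using dvd_zero _
      · exact elementary_dvd he hδ hn' ha P Nat.one_le_two_pow le_rfl hir hti
          (by intro ⟨_, h2, _⟩; exact hiR h2)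
    · -- level t within i = R
      have hR1 : 1 ≤ R := Nat.one_le_two_pow
      apply sum_split _ (show R - 1 ∈ range R by simp; omega)
      · intro t htrange htR
        exact elementary_dvd he hδ hn' ha P hR1 le_rfl le_rfl
          (by have := Finset.mem_range.mp htrange; omega)
          (by intro ⟨_, _, h3⟩; exact htR (by omega))
      · have htop := top_exact (a := a) he hδ hn' ha P
        show ∃ u, Odd u ∧ n.choose ((R-1)+1) * P.choose (R - ((R-1)+1)) * 2^R * St R R
          * R.factorial * Wf N R = 2^(Tv e δ a) * u
        rw [show R - (R - 1 + 1) = 0 by omega, show R - 1 + 1 = R by omega]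
        exact htop

end Main

/-- LTE-style: for odd x, 2^(B+2) ∣ x^(2^B) - 1 when B ≥ 1 -/
lemma odd_pow_two_pow_sub_one {x : ℤ} (hx : Odd x) (B : ℕ) (hB : 1 ≤ B) :
    (2:ℤ)^(B+2) ∣ x^(2^B) - 1 := by
  rcases Nat.exists_eq_add_of_le hB with ⟨C, hC⟩
  subst hC
  clear hB
  induction C with
  | zero =>
    rcases hx with ⟨m, hm⟩
    subst hm
    have h : (2*m+1)^(2^(1+0)) - 1 = 4 * (m * (m+1)) := by ring
    rw [h]
    have hev : Even (m * (m+1)) := Int.even_mul_succ_self m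
    rcases hev with ⟨c, hc⟩
    exact ⟨c, by rw [hc]; ring⟩
  | succ C ih =>
    have hx2 : Odd (x^(2^(1+C))) := hx.pow
    have h2 : (2:ℤ) ∣ x^(2^(1+C)) + 1 := by
      rcases hx2 with ⟨m, hm⟩
      exact ⟨m+1, by omega⟩
    have hfact : x^(2^(1+(C+1))) - 1 = (x^(2^(1+C)) - 1) * (x^(2^(1+C)) + 1) := by
      rw [show 1+(C+1) = (1+C)+1 by omega, pow_succ, mul_comm (2^(1+C)) 2, pow_mul]
      ring
    rw [hfact]
    rcases ih with ⟨c, hc⟩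
    rcases h2 with ⟨d, hd⟩
    refine ⟨c * d, ?_⟩
    rw [hc, hd, show (1+(C+1))+2 = ((1+C)+2)+1 by omega, pow_succ]
    ring

lemma odd_pow_mul_sub_one {x : ℤ} (hx : Odd x) (B q : ℕ) (hB : 1 ≤ B) :
    (2:ℤ)^(B+2) ∣ x^(2^B * q) - 1 := by
  have h1 : x^(2^B * q) = (x^q)^(2^B) := by rw [← pow_mul, mul_comm]
  rw [h1]
  exact odd_pow_two_pow_sub_one hx.pow B hB

lemma padicValInt_pow_mul_odd {v : ℤ} (T : ℕ) (hv : Odd v) :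
    padicValInt 2 (2^T * v) = T := by
  unfold padicValInt
  rw [Int.natAbs_mul, Int.natAbs_pow]
  exact padicValNat_two_pow_mul (Int.natAbs_odd.mpr hv)

section Final
variable {e δ a n n' : ℕ}

/-- the integer sum with natural exponent s -/
lemma ZS_val (he : 2 ≤ e) (hδ : δ = 1 ∨ δ = 2) (hn' : Odd n') (hn : n = 2^a * n')
    (ha : e - 1 ≤ a) (s : ℕ) :
    ∃ u : ℕ, Odd u ∧
      (∑ i ∈ range (2^e+δ), ((2^e+δ).choose (2*i+1) : ℤ) * (2*i+1)^s * ((2*i+1)^n - 1))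
        = 2^(Tv e δ a) * (u : ℤ) := by
  set N := 2^e+δ with hNdef
  have hn1 : 1 ≤ n := by
    have h0 : 0 < n' := by rcases hn' with ⟨b, hb⟩; omega
    rw [hn]
    exact Nat.one_le_iff_ne_zero.mpr (by positivity)
  have hdec := decomp N n s hn1
  obtain ⟨u, hu, hval⟩ := ZN_val (e := e) (δ := δ) he hδ hn' ha s
  rw [← hn] at hval
  refine ⟨u, hu, ?_⟩
  have ext : (∑ i ∈ range N, ((N).choose (2*i+1) : ℤ) * (2*i+1)^s * ((2*i+1)^n - 1))
      = ∑ i ∈ range (N+1), ((N).choose (2*i+1) : ℤ) * (2*i+1)^s * ((2*i+1)^n - 1) := by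
    rw [Finset.sum_range_succ]
    rw [Nat.choose_eq_zero_of_lt (show N < 2*N+1 by omega)]
    push_cast
    ring
  rw [ext]
  have key : ∀ i, ((N).choose (2*i+1) : ℤ) * (2*i+1)^s * ((2*i+1)^n - 1)
      = ((N).choose (2*i+1) * (2*i+1)^(s+n) : ℕ) - ((N).choose (2*i+1) * (2*i+1)^s : ℕ) := by
    intro i
    push_cast
    rw [pow_add]
    ring
  simp only [key]
  rw [Finset.sum_sub_distrib, ← Nat.cast_sum, ← Nat.cast_sum, hdec]
  rw [← hNdef] at hval
  push_cast [hval]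
  ring

theorem stmt9' (e δ n : ℕ) (p : ℤ) (he : 2 ≤ e) (hδ : δ = 1 ∨ δ = 2) (hn : 0 < n)
    (hν : e - 1 ≤ padicValNat 2 n) :
    lemSum e δ p n ≠ 0 ∧
    padicValRat 2 (lemSum e δ p n)
      = 2 ^ e + (padicValNat 2 n : ℤ) - (e : ℤ) + (δ : ℤ) - 1 := by
  haveI : Fact (Nat.Prime 2) := ⟨Nat.prime_two⟩
  set a := padicValNat 2 n with hadef
  obtain ⟨n', hn', hnfac⟩ := val_decomp hn
  rw [← hadef] at hnfac
  set N := 2^e+δ with hNdef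
  set T := Tv e δ a with hTdef
  have hTe : e < 2^e := Nat.lt_two_pow_self (n := e)
  have hT1 : 1 ≤ T := by
    rw [hTdef]; unfold Tv; omega
  set q := (-p).toNat with hqdef
  set pn := p.toNat with hpndef
  set s := pn + q * (2^T - 1) with hsdef
  set K := ∏ j ∈ range N, (2*j+1) with hKdef
  have hKodd : Odd K := by
    rw [hKdef]
    exact Finset.prod_induction _ Odd (fun x y hx hy => hx.mul hy) odd_one
      (fun i _ => ⟨i, by ring⟩)
  have hK1 : 1 ≤ K := by rcases hKodd with ⟨b, hb⟩; omega
  -- the E_i's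
  have hEi : ∀ i ∈ range N, (∏ j ∈ (range N).erase i, (2*j+1)) * (2*i+1) = K :=
    fun i hi => Finset.prod_erase_mul _ _ hi
  -- Y : the integerized sum
  set Y : ℤ := ∑ i ∈ range N, ((N).choose (2*i+1) : ℤ)
      * ((∏ j ∈ (range N).erase i, (2*j+1) : ℕ) : ℤ)^q * ((2*i+1 : ℤ))^pn
      * (((2*i+1 : ℤ))^n - 1) with hYdef
  -- Step B1
  have hB1 : (K:ℚ)^q * lemSum e δ p n = (Y : ℚ) := by
    rw [hYdef]
    push_cast
    unfold lemSum
    rw [Finset.mul_sum]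
    apply Finset.sum_congr rfl
    intro i hi
    have hx0 : (2*(i:ℚ)+1) ≠ 0 := by positivity
    have hKE : (K:ℚ) = ((∏ j ∈ (range N).erase i, (2*j+1) : ℕ) : ℚ) * (2*(i:ℚ)+1) := by
      rw [← hEi i hi]
      push_cast
      ring
    have hzp : (2*(i:ℚ)+1)^(q:ℕ) * (2*(i:ℚ)+1)^p = (2*(i:ℚ)+1)^(pn:ℕ) := by
      rw [← zpow_natCast (2*(i:ℚ)+1) q, ← zpow_natCast (2*(i:ℚ)+1) pn,
        ← zpow_add₀ hx0]
      congr 1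
      omega
    calc (K:ℚ)^q * ((N.choose (2*i+1) : ℚ) * (2*(i:ℚ)+1)^p * ((2*(i:ℚ)+1)^n - 1))
        = (N.choose (2*i+1) : ℚ)
            * (((∏ j ∈ (range N).erase i, (2*j+1) : ℕ) : ℚ)^q
               * ((2*(i:ℚ)+1)^(q:ℕ) * (2*(i:ℚ)+1)^p)) * ((2*(i:ℚ)+1)^n - 1) := by
          rw [hKE, mul_pow]
          ring
      _ = (N.choose (2*i+1) : ℚ) * ((∏ j ∈ (range N).erase i, ((2*j+1):ℚ)))^q
            * (2*(i:ℚ)+1)^pn * ((2*(i:ℚ)+1)^n - 1) := by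
          rw [hzp]
          push_cast
          ring
  -- Step C : integer sum valuation
  obtain ⟨u, hu, hZS⟩ := ZS_val he hδ hn' hnfac hν s
  rw [← hNdef, ← hTdef] at hZS
  -- Step B2 : congruence
  have hB2 : (2:ℤ)^(T+2) ∣ Y - (K:ℤ)^q
      * (∑ i ∈ range N, ((N).choose (2*i+1) : ℤ) * (2*i+1)^s * ((2*i+1)^n - 1)) := by
    rw [hYdef, Finset.mul_sum, ← Finset.sum_sub_distrib]
    apply Finset.dvd_sum
    intro i hi
    have hKEz : (K:ℤ) = ((∏ j ∈ (range N).erase i, (2*j+1) : ℕ) : ℤ) * (2*(i:ℤ)+1) := by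
      rw [← hEi i hi]
      push_cast
      ring
    set E : ℤ := ((∏ j ∈ (range N).erase i, (2*j+1) : ℕ) : ℤ) with hEdef
    have hterm : ((N).choose (2*i+1) : ℤ) * E^q * ((2*i+1 : ℤ))^pn * (((2*i+1 : ℤ))^n - 1)
        - (K:ℤ)^q * (((N).choose (2*i+1) : ℤ) * (2*i+1)^s * ((2*i+1)^n - 1))
        = -(((N).choose (2*i+1) : ℤ) * E^q * ((2*i+1 : ℤ))^pn * (((2*i+1 : ℤ))^n - 1))
          * (((2*i+1:ℤ))^(2^T * q) - 1) := by
      have hq : q + s = pn + 2^T * q := by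
        have h2T : 1 ≤ 2^T := Nat.one_le_two_pow
        have key : q * (2^T - 1) + q * 1 = q * 2^T := by
          rw [← Nat.mul_add]
          congr 1
          omega
        have hcomm : q * 2^T = 2^T * q := Nat.mul_comm _ _
        rw [hsdef]
        omega
      have hks : ((2*i+1:ℤ))^q * ((2*i+1:ℤ))^s = (2*i+1:ℤ)^pn * ((2*i+1:ℤ))^(2^T * q) := by
        rw [← pow_add, hq, pow_add]
      calc ((N).choose (2*i+1) : ℤ) * E^q * ((2*i+1 : ℤ))^pn * (((2*i+1 : ℤ))^n - 1)
          - (K:ℤ)^q * (((N).choose (2*i+1) : ℤ) * (2*i+1)^s * ((2*i+1)^n - 1))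
          = ((N).choose (2*i+1) : ℤ) * E^q * (((2*i+1 : ℤ))^n - 1)
            * (((2*i+1 : ℤ))^pn - ((2*i+1:ℤ))^q * ((2*i+1:ℤ))^s) := by
            rw [hKEz, mul_pow]
            push_cast
            ring
        _ = -(((N).choose (2*i+1) : ℤ) * E^q * ((2*i+1 : ℤ))^pn * (((2*i+1 : ℤ))^n - 1))
            * (((2*i+1:ℤ))^(2^T * q) - 1) := by
            rw [hks]
            push_cast
            ring
    rw [hterm]
    apply Dvd.dvd.mul_left
    exact odd_pow_mul_sub_one ⟨(i:ℤ), by push_cast; ring⟩ T q hT1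
  -- assemble: Y = 2^T * v with v odd
  rw [hZS] at hB2
  rcases hB2 with ⟨w, hw⟩
  have hYval : Y = 2^T * ((K:ℤ)^q * u + 4 * w) := by
    have : Y = (K:ℤ)^q * (2^T * u) + 2^(T+2) * w := by omega
    rw [this, pow_add]
    ring
  have hvodd : Odd ((K:ℤ)^q * u + 4 * w) := by
    have h1 : Odd ((K:ℤ)^q * u) := by
      apply Odd.mul
      · exact (Int.odd_coe_nat K |>.mpr hKodd).pow
      · exact Int.odd_coe_nat u |>.mpr hu
    rcases h1 with ⟨m, hm⟩
    exact ⟨m + 2*w, by omega⟩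
  have hY0 : Y ≠ 0 := by
    rw [hYval]
    intro hc
    have h2T : (0:ℤ) < 2^T := by positivity
    have : (K:ℤ)^q * u + 4 * w = 0 := by
      rcases mul_eq_zero.mp hc with h | h
      · omega
      · exact h
    rcases hvodd with ⟨m, hm⟩
    omega
  have hK0 : ((K:ℚ))^q ≠ 0 := by positivity
  have hlemEq : lemSum e δ p n = (Y:ℚ) / (K:ℚ)^q := by
    rw [eq_div_iff hK0, mul_comm]
    exact hB1
  have hlem0 : lemSum e δ p n ≠ 0 := by
    rw [hlemEq]
    intro hc
    rcases div_eq_zero_iff.mp hc with h | h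
    · exact hY0 (by exact_mod_cast h)
    · exact hK0 h
  refine ⟨hlem0, ?_⟩
  rw [hlemEq, padicValRat.div (p := 2) (by exact_mod_cast hY0) hK0]
  have hvY : padicValRat 2 (Y:ℚ) = (T:ℤ) := by
    rw [padicValRat.of_int, hYval, padicValInt_pow_mul_odd T hvodd]
  have hvK : padicValRat 2 ((K:ℚ)^q) = 0 := by
    have hcast : ((K:ℚ))^q = ((K^q : ℕ) : ℚ) := by push_cast; ring
    rw [hcast, padicValRat.of_nat]
    have : padicValNat 2 (K^q) = 0 := padicValNat.eq_zero_of_not_dvd (by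
      rw [Nat.two_dvd_ne_zero, ← Nat.odd_iff]
      exact hKodd.pow)
    rw [this]
    rfl
  rw [hvY, hvK, hTdef]
  unfold Tv
  have h1 : e ≤ 2^e := le_of_lt hTe
  have h2 : 1 ≤ a + δ := by omega
  rw [Nat.cast_add, Nat.cast_sub h1, Nat.cast_sub h2]
  push_cast
  omega

end Final

end Stmt9

theorem stmt9 (e δ n : ℕ) (p : ℤ) (he : 2 ≤ e) (hδ : δ = 1 ∨ δ = 2) (hn : 0 < n)
    (hν : e - 1 ≤ padicValNat 2 n) :
    lemSum e δ p n ≠ 0 ∧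
    padicValRat 2 (lemSum e δ p n)
      = 2 ^ e + (padicValNat 2 n : ℤ) - (e : ℤ) + (δ : ℤ) - 1 :=
  Stmt9.stmt9' e δ n p he hδ hn hν
end

section
/- If 2^{e+1} − 2^{t+1} ≤ m < 2^{e+1} − 2^t with 0 ≤ t < e, and j = 2^e − 2^r with 0 ≤ r < e, then the binomial coefficient C(m − j, j) is odd if and only if r = t. -/
open Nat

lemma odd_choose_iff_testBit : ∀ n k : ℕ, Odd (n.choose k) ↔
    ∀ i, k.testBit i = true → n.testBit i = true := by
  intro n
  induction n using Nat.strong_induction_on with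
  | _ n ih =>
    intro k
    rcases Nat.eq_zero_or_pos n with h0 | hpos
    · subst h0
      rcases Nat.eq_zero_or_pos k with hk | hk
      · subst hk; simp
      · obtain ⟨i, hi⟩ := Nat.exists_testBit_of_ne_zero hk.ne'
        simp only [Nat.choose_eq_zero_of_lt hk]
        constructor
        · rintro ⟨c, hc⟩; omega
        · intro h; have := h i hi; simp at this
    · have lucas := Choose.choose_modEq_choose_mod_mul_choose_div_nat (p := 2) (n := n) (k := k)
      have hodd : Odd (n.choose k) ↔
          Odd ((n % 2).choose (k % 2)) ∧ Odd ((n / 2).choose (k / 2)) := by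
        rw [Nat.odd_iff, lucas, ← Nat.odd_iff, Nat.odd_mul]
      rw [hodd]
      have ih2 := ih (n / 2) (Nat.div_lt_self hpos one_lt_two) (k / 2)
      have hbit : Odd ((n % 2).choose (k % 2)) ↔ (k % 2 = 1 → n % 2 = 1) := by
        have hn2 := Nat.mod_two_eq_zero_or_one n
        have hk2 := Nat.mod_two_eq_zero_or_one k
        rcases hn2 with h | h <;> rcases hk2 with h' | h' <;>
          simp [h, h', Nat.choose]
      rw [hbit, ih2]
      constructor
      · rintro ⟨h0, hs⟩ i hi
        cases i with
        | zero =>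
          simp only [Nat.testBit_zero, decide_eq_true_eq] at hi ⊢
          exact h0 hi
        | succ i =>
          rw [Nat.testBit_add_one] at hi ⊢
          exact hs i hi
      · intro h
        constructor
        · intro hk1
          have := h 0 (by simp [hk1])
          simpa using this
        · intro i hi
          rw [Nat.testBit_div_two] at hi ⊢
          exact h (i + 1) hi

lemma testBit_pow_sub_pow {a b : ℕ} (h : b ≤ a) (i : ℕ) :
    (2 ^ a - 2 ^ b).testBit i = (decide (b ≤ i) && decide (i < a)) := by
  have key : 2 ^ b * 2 ^ (a - b) = 2 ^ a := by
    rw [← pow_add]; congr 1; omega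
  have hrep : 2 ^ a - 2 ^ b = 2 ^ b * (2 ^ (a - b) - 1) := by
    have := Nat.one_le_two_pow (n := a - b)
    rw [Nat.mul_sub, key]; omega
  rw [hrep, Nat.testBit_two_pow_mul, Nat.testBit_two_pow_sub_one]
  rcases le_or_gt b i with hbi | hbi
  · simp [hbi]
    constructor <;> intro <;> omega
  · simp [hbi, Nat.not_le_of_lt hbi]

theorem stmt10 (e t r m : ℕ) (ht : t < e) (hr : r < e)
    (h1 : 2 ^ (e + 1) - 2 ^ (t + 1) ≤ m) (h2 : m < 2 ^ (e + 1) - 2 ^ t) :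
    Odd (Nat.choose (m - (2 ^ e - 2 ^ r)) (2 ^ e - 2 ^ r)) ↔ r = t := by
  have pe1 : 2 ^ (e + 1) = 2 * 2 ^ e := by ring
  have pt1 : 2 ^ (t + 1) = 2 * 2 ^ t := by ring
  have pr1 : 2 ^ (r + 1) = 2 * 2 ^ r := by ring
  have hte : 2 ^ t ≤ 2 ^ e := Nat.pow_le_pow_right (by norm_num) ht.le
  have hre : 2 ^ r ≤ 2 ^ e := Nat.pow_le_pow_right (by norm_num) hr.le
  have hre1 : 2 ^ (r + 1) ≤ 2 ^ e := Nat.pow_le_pow_right (by norm_num) hr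
  have hte1 : 2 ^ (t + 1) ≤ 2 ^ e := Nat.pow_le_pow_right (by norm_num) ht
  rcases lt_trichotomy r t with hc | hc | hc
  · -- r < t : binomial coefficient is zero
    have h2rt : 2 ^ (r + 1) ≤ 2 ^ t := Nat.pow_le_pow_right (by norm_num) hc
    have hlt : m - (2 ^ e - 2 ^ r) < 2 ^ e - 2 ^ r := by omega
    rw [Nat.choose_eq_zero_of_lt hlt]
    simp [Nat.odd_iff]
    omega
  · -- r = t
    subst hc
    refine iff_of_true ?_ rfl
    rw [odd_choose_iff_testBit]
    intro i hi
    rw [testBit_pow_sub_pow hr.le] at hi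
    simp only [Bool.and_eq_true, decide_eq_true_eq] at hi
    set s := m - (2 ^ (e + 1) - 2 ^ (r + 1)) with hs
    have hslt : s < 2 ^ r := by omega
    have key : 2 ^ r * 2 ^ (e - r) = 2 ^ e := by rw [← pow_add]; congr 1; omega
    have hrep : m - (2 ^ e - 2 ^ r) = 2 ^ r * (2 ^ (e - r) - 1) + s := by
      have := Nat.one_le_two_pow (n := e - r)
      rw [Nat.mul_sub, key]; omega
    rw [hrep, Nat.testBit_two_pow_mul_add _ hslt, if_neg (by omega),
      Nat.testBit_two_pow_sub_one]
    simp only [decide_eq_true_eq]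
    omega
  · -- r > t
    refine iff_of_false ?_ (by omega)
    intro hodd
    have hbr := (odd_choose_iff_testBit _ _).mp hodd r
      (by rw [testBit_pow_sub_pow hr.le]; simp; omega)
    have h2tr : 2 ^ (t + 1) ≤ 2 ^ r := Nat.pow_le_pow_right (by norm_num) hc
    set u := m - (2 ^ e - 2 ^ r) - 2 ^ e with hu
    have hult : u < 2 ^ (r + 1) := by omega
    have key : 2 ^ (r + 1) * 2 ^ (e - r - 1) = 2 ^ e := by rw [← pow_add]; congr 1; omega
    have hrep : m - (2 ^ e - 2 ^ r) = 2 ^ (r + 1) * 2 ^ (e - r - 1) + u := by omega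
    rw [hrep, Nat.testBit_two_pow_mul_add _ hult, if_pos (by omega)] at hbr
    have : u < 2 ^ r := by omega
    rw [Nat.testBit_lt_two_pow this] at hbr
    exact Bool.false_ne_true hbr
end

section
/- Suppose 2^e + 2^t ≤ n < 2^e + 2^{t+1} with 0 ≤ t ≤ e−1, let S_n = {p ∈ ℕ : max(0, n − 2^e − 2^{e-1}) ≤ p < 2^{e-1} and C(n−1−p, p) is odd}, let p ∈ S_n, and let p₀ be the residue of p modulo 2^t. Then α(p − p₀) ≤ 1, and both binomial coefficients C(n − p₀ − 1, p₀) and C(n − 2^{e-1} − p₀ − 1, 2^{e-1} + p₀) are odd. -/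
lemma land_zero_iff (x y : ℕ) :
    x &&& y = 0 ↔ ∀ i, ¬(x.testBit i = true ∧ y.testBit i = true) := by
  constructor
  · intro h i ⟨h1, h2⟩
    have h3 := Nat.testBit_land x y i
    rw [h, Nat.zero_testBit, h1, h2] at h3
    simp at h3
  · intro h
    apply Nat.zero_of_testBit_eq_false
    intro i
    rw [Nat.testBit_land]
    have := h i
    rcases hx : x.testBit i <;> rcases hy : y.testBit i <;> simp_all

lemma land_div_two (x y : ℕ) (h : x &&& y = 0) : x / 2 &&& y / 2 = 0 := by
  rw [land_zero_iff] at h ⊢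
  intro i ⟨h1, h2⟩
  exact h (i + 1) ⟨by rw [Nat.testBit_add_one]; exact h1,
    by rw [Nat.testBit_add_one]; exact h2⟩

lemma kummer_aux : ∀ N a b : ℕ, a + b ≤ N → (Odd ((a + b).choose b) ↔ a &&& b = 0) := by
  intro N
  induction N with
  | zero =>
    intro a b h
    have h1 : a = 0 := by omega
    have h2 : b = 0 := by omega
    subst h1; subst h2; decide
  | succ N ih =>
    intro a b h
    by_cases h0 : a + b = 0
    · have h1 : a = 0 := by omega
      have h2 : b = 0 := by omega
      subst h1; subst h2; decide
    have lucas := Choose.choose_modEq_choose_mod_mul_choose_div_nat (p := 2) (n := a + b) (k := b)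
    unfold Nat.ModEq at lucas
    have tail : ((a + b) % 2).choose (b % 2) = 1 → ¬(a % 2 = 1 ∧ b % 2 = 1) →
        (Odd ((a + b).choose b) ↔ a &&& b = 0) := by
      intro hc hnb
      have hdiv : (a + b) / 2 = a / 2 + b / 2 := by omega
      rw [hc, one_mul, hdiv] at lucas
      rw [Nat.odd_iff, lucas, ← Nat.odd_iff, ih (a / 2) (b / 2) (by omega)]
      constructor
      · intro hh
        rw [land_zero_iff] at hh ⊢
        intro i hi
        cases i with
        | zero =>
          simp only [Nat.testBit_zero, decide_eq_true_eq] at hi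
          exact hnb hi
        | succ i =>
          simp only [Nat.testBit_add_one] at hi
          exact hh i hi
      · intro hh
        exact land_div_two _ _ hh
    rcases Nat.mod_two_eq_zero_or_one a with ha | ha <;>
      rcases Nat.mod_two_eq_zero_or_one b with hb | hb
    · exact tail (by rw [Nat.add_mod, ha, hb]; decide) (by omega)
    · exact tail (by rw [Nat.add_mod, ha, hb]; decide) (by omega)
    · exact tail (by rw [Nat.add_mod, ha, hb]; decide) (by omega)
    · -- both odd: choose is even, land nonzero
      have hab2 : (a + b) % 2 = 0 := by omega
      rw [hab2, hb] at lucas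
      norm_num at lucas
      constructor
      · intro hodd
        rw [Nat.odd_iff] at hodd
        omega
      · intro hland
        exfalso
        rw [land_zero_iff] at hland
        exact hland 0 ⟨by simp [Nat.testBit_zero, ha], by simp [Nat.testBit_zero, hb]⟩

lemma kummer (a b : ℕ) : Odd ((a + b).choose b) ↔ a &&& b = 0 :=
  kummer_aux (a + b) a b le_rfl

lemma add_lt_two_pow_of_land (T : ℕ) : ∀ x y : ℕ, x < 2 ^ T → y < 2 ^ T → x &&& y = 0 →
    x + y < 2 ^ T := by
  induction T with
  | zero => intro x y hx hy _; omega
  | succ T ih =>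
    intro x y hx hy hxy
    have hpow : 2 ^ (T + 1) = 2 * 2 ^ T := by ring
    have h2 : x / 2 + y / 2 < 2 ^ T := ih _ _ (by omega) (by omega) (land_div_two x y hxy)
    have hb : ¬(x % 2 = 1 ∧ y % 2 = 1) := by
      intro ⟨h1, h2⟩
      rw [land_zero_iff] at hxy
      exact hxy 0 ⟨by simp [Nat.testBit_zero, h1], by simp [Nat.testBit_zero, h2]⟩
    omega

lemma alpha_two_pow (k : ℕ) : alpha (2 ^ k) = 1 := by
  induction k with
  | zero =>
    show (Nat.digits 2 1).sum = 1
    rw [Nat.digits_def' (by norm_num : 1 < 2) (by norm_num)]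
    norm_num
  | succ k ih =>
    show (Nat.digits 2 (2 ^ (k + 1))).sum = 1
    rw [Nat.digits_def' (by norm_num : 1 < 2) (by positivity)]
    have h1 : 2 ^ (k + 1) % 2 = 0 := by
      have : 2 ^ (k + 1) = 2 ^ k * 2 := by ring
      omega
    have h2 : 2 ^ (k + 1) / 2 = 2 ^ k := by
      have : 2 ^ (k + 1) = 2 ^ k * 2 := by ring
      omega
    rw [h1, h2, List.sum_cons]
    simpa [alpha] using ih

lemma pow_two_structure (s A q : ℕ) (hsum : A + q = 2 ^ s)
    (hd : ∀ i, ¬(A.testBit i = true ∧ q.testBit (i + 1) = true)) :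
    q = 0 ∨ ∃ k, q = 2 ^ k := by
  by_cases hq0 : q = 0
  · exact Or.inl hq0
  right
  by_cases hqs : q = 2 ^ s
  · exact ⟨s, hqs⟩
  obtain ⟨ℓ, u, hu, hqe⟩ := Nat.exists_eq_two_pow_mul_odd hq0
  obtain ⟨v, hv⟩ := hu
  by_cases hv0 : v = 0
  · exact ⟨ℓ, by rw [hqe, hv, hv0]; ring⟩
  obtain ⟨j, w, hw, hve⟩ := Nat.exists_eq_two_pow_mul_odd hv0
  obtain ⟨w', hw'⟩ := hw
  exfalso
  have hq_eq : q = 2 ^ (ℓ + 1 + j) * w + 2 ^ ℓ := by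
    rw [hqe, hv, hve]; ring
  have hw1 : 1 ≤ w := by omega
  have hone : 1 ≤ 2 ^ ℓ := Nat.one_le_two_pow
  have hqlt : q < 2 ^ s := lt_of_le_of_ne (by omega) hqs
  have hq_ge : 2 ^ (ℓ + 1 + j) ≤ q := by
    have h1 : 2 ^ (ℓ + 1 + j) * 1 ≤ 2 ^ (ℓ + 1 + j) * w := Nat.mul_le_mul_left _ hw1
    omega
  have hhs : ℓ + 1 + j < s := by
    have := lt_of_le_of_lt hq_ge hqlt
    exact (Nat.pow_lt_pow_iff_right (by norm_num)).mp this
  have hlj : 2 ^ ℓ < 2 ^ (ℓ + 1 + j) := by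
    apply Nat.pow_lt_pow_right (by norm_num); omega
  -- q.testBit (ℓ + 1 + j) = true
  have hqbit : q.testBit (ℓ + 1 + j) = true := by
    rw [Nat.testBit_eq_decide_div_mod_eq]
    have hdivq : q / 2 ^ (ℓ + 1 + j) = w := by
      rw [hq_eq, add_comm, Nat.add_mul_div_left _ _ (by positivity : 0 < 2 ^ (ℓ + 1 + j)),
        Nat.div_eq_of_lt hlj]
      omega
    have hwodd : w % 2 = 1 := by omega
    simp [hdivq, hwodd]
  -- (q - 1).testBit (ℓ + j) = false
  have hd1 : (q - 1).testBit (ℓ + j) = false := by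
    rw [Nat.testBit_eq_decide_div_mod_eq]
    have he : q - 1 = 2 ^ ℓ - 1 + 2 ^ (ℓ + j) * (2 * w) := by
      have h2 : 2 ^ (ℓ + 1 + j) * w = 2 ^ (ℓ + j) * (2 * w) := by ring
      omega
    have hlt : 2 ^ ℓ - 1 < 2 ^ (ℓ + j) := by
      have : 2 ^ ℓ ≤ 2 ^ (ℓ + j) := Nat.pow_le_pow_right (by norm_num) (by omega)
      omega
    rw [he, Nat.add_mul_div_left _ _ (by positivity : 0 < 2 ^ (ℓ + j)),
      Nat.div_eq_of_lt hlt]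
    simp [Nat.mul_mod_right]
  -- A.testBit (ℓ + j) = true
  have hAbit : A.testBit (ℓ + j) = true := by
    have hA_eq : A = 2 ^ s - (q - 1 + 1) := by omega
    rw [hA_eq, Nat.testBit_two_pow_sub_succ (by omega : q - 1 < 2 ^ s), hd1]
    simp [show ℓ + j < s from by omega]
  exact hd (ℓ + j) ⟨hAbit, by rw [show ℓ + j + 1 = ℓ + 1 + j from by omega]; exact hqbit⟩

theorem stmt11 (n e t p : ℕ)
    (ht : (t : ℤ) ≤ (e : ℤ) - 1)
    (hn1 : 2 ^ e + 2 ^ t ≤ n) (hn2 : n < 2 ^ e + 2 ^ (t + 1))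
    (hp1 : n - 2 ^ e - 2 ^ (e - 1) ≤ p) (hp2 : p < 2 ^ (e - 1))
    (hp3 : Odd (Nat.choose (n - 1 - p) p)) :
    alpha (p - p % 2 ^ t) ≤ 1 ∧
    Odd (Nat.choose (n - (p % 2 ^ t) - 1) (p % 2 ^ t)) ∧
    Odd (Nat.choose (n - 2 ^ (e - 1) - (p % 2 ^ t) - 1) (2 ^ (e - 1) + p % 2 ^ t)) := by
  have hte : t + 1 ≤ e := by omega
  set E := e - 1 with hE
  have heE : e = E + 1 := by omega
  have h2e : 2 ^ e = 2 * 2 ^ E := by rw [heE]; ring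
  have h2t : 2 ^ (t + 1) = 2 * 2 ^ t := by ring
  have htpos : (1 : ℕ) ≤ 2 ^ t := Nat.one_le_two_pow
  have hEt : 2 ^ t ≤ 2 ^ E := Nat.pow_le_pow_right (by norm_num) (by omega)
  set m := n - 2 ^ e with hm
  have hm1 : 2 ^ t ≤ m := by omega
  have hm2 : m < 2 ^ (t + 1) := by omega
  have hnm : n = 2 ^ e + m := by omega
  set p₀ := p % 2 ^ t with hp₀
  set q := p / 2 ^ t with hq
  have dp : 2 ^ t * q + p₀ = p := Nat.div_add_mod p (2 ^ t)
  have hp₀t : p₀ < 2 ^ t := by rw [hp₀]; exact Nat.mod_lt _ (by positivity)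
  set a := n - 1 - 2 * p with ha
  have h2p : 2 * p < 2 ^ e := by omega
  have hna : a + 2 * p = 2 ^ e + (m - 1) := by omega
  set A := a / 2 ^ (t + 1) with hA
  set a₀ := a % 2 ^ (t + 1) with ha₀
  have da : 2 ^ (t + 1) * A + a₀ = a := Nat.div_add_mod a _
  have ha₀lt : a₀ < 2 ^ (t + 1) := by rw [ha₀]; exact Nat.mod_lt _ (by positivity)
  -- disjointness of a and p
  have hd : ∀ i, ¬(a.testBit i = true ∧ p.testBit i = true) := by
    rw [← land_zero_iff]
    rw [show n - 1 - p = a + p from by omega] at hp3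
    exact (kummer a p).mp hp3
  have hd₀ : ∀ i, ¬(a₀.testBit i = true ∧ p₀.testBit i = true) := by
    intro i ⟨h1, h2⟩
    rw [ha₀, Nat.testBit_mod_two_pow] at h1
    rw [hp₀, Nat.testBit_mod_two_pow] at h2
    simp only [Bool.and_eq_true, decide_eq_true_eq] at h1 h2
    exact hd i ⟨h1.2, h2.2⟩
  have hsum : a₀ + p₀ < 2 ^ (t + 1) := by
    apply add_lt_two_pow_of_land _ _ _ ha₀lt (by omega)
    rw [land_zero_iff]; exact hd₀
  have e1 : a + 2 * p = (a₀ + 2 * p₀) + 2 ^ (t + 1) * (A + q) := by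
    rw [← da, ← dp]; ring
  have hsplit : 2 ^ (t + 1) * 2 ^ (E - t) = 2 ^ e := by
    rw [← pow_add]; congr 1; omega
  have hmod : a₀ + 2 * p₀ = m - 1 := by
    have h1 : (a + 2 * p) % 2 ^ (t + 1) = (a₀ + 2 * p₀) % 2 ^ (t + 1) := by
      rw [e1, Nat.add_mul_mod_self_left]
    have h2 : (a + 2 * p) % 2 ^ (t + 1) = (m - 1) % 2 ^ (t + 1) := by
      rw [hna, show 2 ^ e + (m - 1) = (m - 1) + 2 ^ (t + 1) * 2 ^ (E - t) from by omega,
        Nat.add_mul_mod_self_left]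
    have h3 : (m - 1) % 2 ^ (t + 1) = m - 1 := Nat.mod_eq_of_lt (by omega)
    have h5 : (a₀ + 2 * p₀) % 2 ^ (t + 1) = m - 1 := by rw [← h1, h2, h3]
    have h4 := Nat.div_add_mod (a₀ + 2 * p₀) (2 ^ (t + 1))
    rw [h5] at h4
    set c := (a₀ + 2 * p₀) / 2 ^ (t + 1) with hc
    rcases Nat.eq_zero_or_pos c with hc0 | hc1
    · rw [hc0, mul_zero] at h4; omega
    · exfalso
      have : 2 ^ (t + 1) * 1 ≤ 2 ^ (t + 1) * c := Nat.mul_le_mul_left _ hc1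
      omega
  have hAq : A + q = 2 ^ (E - t) := by
    have h6 : 2 ^ (t + 1) * (A + q) = 2 ^ (t + 1) * 2 ^ (E - t) := by
      rw [hsplit]; omega
    exact Nat.eq_of_mul_eq_mul_left (by positivity) h6
  have ha₀E : a₀ < 2 ^ E := by
    rcases Nat.lt_or_ge t E with hlt | hge
    · have : 2 ^ (t + 1) ≤ 2 ^ E := Nat.pow_le_pow_right (by norm_num) (by omega)
      omega
    · have htE' : t = E := by omega
      have hpp : p₀ = p := by rw [hp₀, htE']; exact Nat.mod_eq_of_lt hp2
      omega
  -- Conclusion 2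
  have c2 : Odd ((n - p₀ - 1).choose p₀) := by
    rw [show n - p₀ - 1 = (2 ^ e + a₀) + p₀ from by omega]
    rw [kummer, land_zero_iff]
    intro i ⟨h1, h2⟩
    have h2' : i < t ∧ p.testBit i = true := by
      rw [hp₀, Nat.testBit_mod_two_pow] at h2
      simpa using h2
    rw [Nat.testBit_two_pow_add_gt (by omega : i < e)] at h1
    exact hd₀ i ⟨h1, h2⟩
  -- Conclusion 3
  have c3 : Odd ((n - 2 ^ E - p₀ - 1).choose (2 ^ E + p₀)) := by
    rw [show n - 2 ^ E - p₀ - 1 = a₀ + (2 ^ E + p₀) from by omega]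
    rw [kummer, land_zero_iff]
    intro i ⟨h1, h2⟩
    rcases Nat.lt_or_ge i E with hiE | hiE
    · rw [Nat.testBit_two_pow_add_gt hiE] at h2
      exact hd₀ i ⟨h1, h2⟩
    · have hlt : a₀ < 2 ^ i := lt_of_lt_of_le ha₀E (Nat.pow_le_pow_right (by norm_num) hiE)
      rw [Nat.testBit_eq_false_of_lt hlt] at h1
      exact absurd h1 (by simp)
  -- Conclusion 1
  have c1 : alpha (p - p₀) ≤ 1 := by
    have hd' : ∀ i, ¬(A.testBit i = true ∧ q.testBit (i + 1) = true) := by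
      intro i ⟨h1, h2⟩
      have e2 : A.testBit i = a.testBit (t + 1 + i) := by
        rw [hA, Nat.testBit_eq_decide_div_mod_eq, Nat.testBit_eq_decide_div_mod_eq, Nat.div_div_eq_div_mul, ← pow_add]
      have e3 : q.testBit (i + 1) = p.testBit (t + (i + 1)) := by
        rw [hq, Nat.testBit_eq_decide_div_mod_eq, Nat.testBit_eq_decide_div_mod_eq, Nat.div_div_eq_div_mul, ← pow_add]
      refine hd (t + 1 + i) ⟨by rw [← e2]; exact h1, ?_⟩
      rw [show t + 1 + i = t + (i + 1) from by omega, ← e3]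
      exact h2
    have hppq : p - p₀ = 2 ^ t * q := by omega
    rcases pow_two_structure (E - t) A q hAq hd' with h0 | ⟨k, hk⟩
    · rw [hppq, h0, mul_zero]
      simp [alpha]
    · rw [hppq, hk, ← pow_add, alpha_two_pow]
  exact ⟨c1, c2, c3⟩
end

section
/- For every nonnegative integer m and every integer x, Σ_{j=0}^m C(j, m−j)·C(x−j, j) ≡ C(x+1, m) + 2·C(x+1, m−1) (mod 4), where C(a, b) denotes the integer-valued generalized binomial coefficient for integer a (so in particular C(j, m−j) is the ordinary binomial coefficient, zero when j < m−j), and C(x+1, m−1) = 0 when m = 0. -/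
/-- The integer-valued generalized binomial coefficient
`C(a, b) = a(a−1)⋯(a−b+1)/b!` for `a : ℤ`, `b : ℕ`. -/
def ichoose (a : ℤ) (b : ℕ) : ℤ :=
  if 0 ≤ a then (Nat.choose a.toNat b : ℤ)
  else (-1) ^ b * (Nat.choose ((-a).toNat + b - 1) b : ℤ)

lemma ichoose_zero (a : ℤ) : ichoose a 0 = 1 := by
  unfold ichoose; split <;> simp

lemma ichoose_one (a : ℤ) : ichoose a 1 = a := by
  unfold ichoose
  split
  · simp [Nat.choose_one_right]; omega
  · simp [Nat.choose_one_right]; omega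

lemma ichoose_natCast (n : ℕ) (b : ℕ) : ichoose (n : ℤ) b = (Nat.choose n b : ℤ) := by
  rw [ichoose, if_pos (Int.natCast_nonneg n), Int.toNat_natCast]

lemma ichoose_pascal (a : ℤ) (b : ℕ) :
    ichoose a (b + 1) = ichoose (a - 1) (b + 1) + ichoose (a - 1) b := by
  rcases lt_trichotomy a 0 with h | h | h
  · have h1 : ¬ (0 ≤ a) := by omega
    have h2 : ¬ (0 ≤ a - 1) := by omega
    simp only [ichoose, if_neg h1, if_neg h2]
    have hn1 : (-a).toNat ≥ 1 := by omega
    have hn : (-(a - 1)).toNat = (-a).toNat + 1 := by omega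
    rw [hn]
    have hb1 : (-a).toNat + (b + 1) - 1 = ((-a).toNat + b - 1) + 1 := by omega
    have hb2 : (-a).toNat + 1 + (b + 1) - 1 = (((-a).toNat + b - 1) + 1) + 1 := by omega
    have hb3 : (-a).toNat + 1 + b - 1 = ((-a).toNat + b - 1) + 1 := by omega
    rw [hb1, hb2, hb3, Nat.choose_succ_succ ((-a).toNat + b - 1 + 1) b]
    push_cast
    ring
  · subst h
    have h2 : ¬ ((0:ℤ) ≤ 0 - 1) := by omega
    simp only [ichoose, if_pos le_rfl, if_neg h2]
    have hn : (-(0 - 1 : ℤ)).toNat = 1 := by omega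
    rw [hn]
    have hb2 : 1 + (b + 1) - 1 = b + 1 := by omega
    have hb3 : 1 + b - 1 = b := by omega
    rw [hb2, hb3, Nat.choose_self, Nat.choose_self]
    simp [pow_succ, Nat.choose_eq_zero_of_lt]
  · have h1 : (0:ℤ) ≤ a := by omega
    have h2 : (0:ℤ) ≤ a - 1 := by omega
    simp only [ichoose, if_pos h1, if_pos h2]
    have hn : a.toNat = (a - 1).toNat + 1 := by omega
    rw [hn, Nat.choose_succ_succ]
    push_cast
    ring

def Sf (m : ℕ) (x : ℤ) : ℤ :=
  ∑ j ∈ Finset.range (m + 1), (Nat.choose j (m - j) : ℤ) * ichoose (x - j) j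

def Rf (m : ℕ) (x : ℤ) : ℤ :=
  ichoose (x + 1) m + 2 * (if m = 0 then 0 else ichoose (x + 1) (m - 1))

lemma Srec (m : ℕ) (x : ℤ) :
    Sf (m + 2) x - Sf (m + 2) (x - 1) = Sf (m + 1) (x - 2) + Sf m (x - 2) := by
  unfold Sf
  rw [← Finset.sum_sub_distrib, Finset.sum_range_succ']
  have h0 : (Nat.choose 0 (m + 2 - 0) : ℤ) * ichoose (x - (0:ℕ)) 0
      - (Nat.choose 0 (m + 2 - 0) : ℤ) * ichoose (x - 1 - (0:ℕ)) 0 = 0 := by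
    rw [Nat.choose_eq_zero_of_lt (by omega)]
    push_cast
    ring
  rw [h0, add_zero]
  have hterm : ∀ i ∈ Finset.range (m + 2),
      (Nat.choose (i+1) (m + 2 - (i+1)) : ℤ) * ichoose (x - ((i+1:ℕ):ℤ)) (i+1)
        - (Nat.choose (i+1) (m + 2 - (i+1)) : ℤ) * ichoose (x - 1 - ((i+1:ℕ):ℤ)) (i+1)
      = (Nat.choose (i+1) (m + 1 - i) : ℤ) * ichoose ((x - 2) - i) i := by
    intro i _
    have he : m + 2 - (i+1) = m + 1 - i := by omega
    have hp := ichoose_pascal (x - ((i+1:ℕ):ℤ)) i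
    have he2 : x - ((i+1:ℕ):ℤ) - 1 = x - 1 - ((i+1:ℕ):ℤ) := by push_cast; ring
    have he3 : x - 1 - ((i+1:ℕ):ℤ) = (x - 2) - i := by push_cast; ring
    rw [he2, he3] at hp
    rw [he, he3, hp]
    ring
  rw [Finset.sum_congr rfl hterm]
  rw [Finset.sum_range_succ, Finset.sum_range_succ
    (fun i => (Nat.choose i (m + 1 - i) : ℤ) * ichoose ((x - 2) - i) i)]
  have hlast : (Nat.choose (m+1+1) (m + 1 - (m+1)) : ℤ) * ichoose ((x-2) - ((m+1:ℕ):ℤ)) (m+1)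
      = (Nat.choose (m+1) (m + 1 - (m+1)) : ℤ) * ichoose ((x-2) - ((m+1:ℕ):ℤ)) (m+1) := by
    have : m + 1 - (m+1) = 0 := by omega
    rw [this, Nat.choose_zero_right, Nat.choose_zero_right]
  rw [hlast]
  have hsum : ∑ i ∈ Finset.range (m+1),
      (Nat.choose (i+1) (m + 1 - i) : ℤ) * ichoose ((x - 2) - i) i
      = (∑ i ∈ Finset.range (m+1),
          (Nat.choose i (m + 1 - i) : ℤ) * ichoose ((x - 2) - i) i)
        + ∑ i ∈ Finset.range (m+1),
          (Nat.choose i (m - i) : ℤ) * ichoose ((x - 2) - i) i := by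
    rw [← Finset.sum_add_distrib]
    apply Finset.sum_congr rfl
    intro i hi
    have hi' : i ≤ m := by simpa [Nat.lt_succ_iff] using hi
    have he : m + 1 - i = (m - i) + 1 := by omega
    rw [he, Nat.choose_succ_succ]
    push_cast
    ring
  rw [hsum]
  ring

lemma Rrec (k : ℕ) (x : ℤ) : Rf (k + 1) x - Rf (k + 1) (x - 1) = Rf k (x - 1) := by
  have hx : x - 1 + 1 = x := by ring
  cases k with
  | zero =>
    simp only [Rf, if_neg (Nat.one_ne_zero), if_pos rfl, hx]
    have hp := ichoose_pascal (x + 1) 0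
    have he : x + 1 - 1 = x := by ring
    rw [he] at hp
    simp only [Nat.sub_self]
    rw [hp]
    simp [ichoose_zero]
  | succ t =>
    have h1 : t + 1 + 1 ≠ 0 := by omega
    have h2 : t + 1 ≠ 0 := by omega
    simp only [Rf, if_neg h1, if_neg h2, hx, Nat.add_sub_cancel]
    have hp1 := ichoose_pascal (x + 1) (t + 1)
    have hp2 := ichoose_pascal (x + 1) t
    have he : x + 1 - 1 = x := by ring
    rw [he] at hp1 hp2
    rw [hp1, hp2]
    ring

lemma two_mul_choose_two : ∀ n : ℕ, 2 * Nat.choose n 2 = n * (n - 1) := by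
  intro n
  induction n with
  | zero => rfl
  | succ k ih =>
    cases k with
    | zero => rfl
    | succ j =>
      rw [Nat.choose_succ_succ, Nat.mul_add, ih, Nat.choose_one_right]
      simp only [Nat.add_sub_cancel]
      ring

lemma Sbase (m : ℕ) : Sf m (m : ℤ) = if m % 2 = 0 then 1 else 0 := by
  unfold Sf
  have hterm : ∀ j ∈ Finset.range (m + 1),
      (Nat.choose j (m - j) : ℤ) * ichoose ((m:ℤ) - j) j
      = if m = 2 * j then 1 else 0 := by
    intro j hj
    have hj' : j ≤ m := by simpa [Nat.lt_succ_iff] using hj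
    have h1 : (m:ℤ) - j = ((m - j : ℕ) : ℤ) := by omega
    rw [h1, ichoose_natCast]
    by_cases h : m = 2 * j
    · have : m - j = j := by omega
      rw [this, Nat.choose_self, if_pos h]
      norm_num
    · rw [if_neg h]
      rcases Nat.lt_trichotomy (m - j) j with hlt | heq | hgt
      · rw [Nat.choose_eq_zero_of_lt hlt]
        push_cast; ring
      · omega
      · rw [Nat.choose_eq_zero_of_lt hgt]
        push_cast; ring
  rw [Finset.sum_congr rfl hterm]
  by_cases hm : m % 2 = 0
  · rw [if_pos hm]
    have hterm2 : ∀ j ∈ Finset.range (m + 1),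
        (if m = 2 * j then (1:ℤ) else 0) = if m / 2 = j then 1 else 0 := by
      intro j _
      congr 1
      simp only [eq_iff_iff]
      omega
    rw [Finset.sum_congr rfl hterm2, Finset.sum_ite_eq]
    rw [if_pos (Finset.mem_range.mpr (by omega))]
  · rw [if_neg hm]
    apply Finset.sum_eq_zero
    intro j _
    rw [if_neg (by omega)]

lemma Rbase (m : ℕ) : Rf m (m : ℤ) = ((m:ℤ) + 1) + ((m:ℤ) + 1) * m := by
  cases m with
  | zero => simp [Rf, ichoose_zero]
  | succ t =>
    have h2 : t + 1 ≠ 0 := by omega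
    simp only [Rf, if_neg h2, Nat.add_sub_cancel]
    have hc : ((t+1:ℕ):ℤ) + 1 = ((t + 2 : ℕ) : ℤ) := by push_cast; ring
    rw [hc, ichoose_natCast, ichoose_natCast]
    have h3 : Nat.choose (t + 2) (t + 1) = t + 2 := Nat.choose_succ_self_right (t + 1)
    have h4 : Nat.choose (t + 2) t = Nat.choose (t + 2) 2 := by
      have h := Nat.choose_symm (n := t + 2) (k := 2) (by omega)
      have he : t + 2 - 2 = t := by omega
      rwa [he] at h
    have h5 := two_mul_choose_two (t + 2)
    have h6 : t + 2 - 1 = t + 1 := by omega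
    rw [h6] at h5
    rw [h3, h4]
    have h7 : (2:ℤ) * (Nat.choose (t + 2) 2 : ℤ) = ((t + 2 : ℕ) : ℤ) * ((t + 1 : ℕ) : ℤ) := by
      have := congrArg (Nat.cast : ℕ → ℤ) h5
      push_cast at this ⊢
      linarith
    push_cast at h7 ⊢
    linarith

lemma base_dvd (m : ℕ) : 4 ∣ Rf m (m : ℤ) - Sf m (m : ℤ) := by
  rw [Rbase, Sbase]
  rcases Nat.even_or_odd m with ⟨k, hk⟩ | ⟨k, hk⟩
  · have hm : m % 2 = 0 := by omega
    rw [if_pos hm]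
    refine ⟨(k:ℤ) * k + k, ?_⟩
    have : (m : ℤ) = 2 * k := by omega
    rw [this]; ring
  · have hm : ¬ (m % 2 = 0) := by omega
    rw [if_neg hm]
    refine ⟨(k:ℤ) * k + 2 * k + 1, ?_⟩
    have : (m : ℤ) = 2 * k + 1 := by omega
    rw [this]; ring

lemma main_dvd (m : ℕ) : ∀ x : ℤ, 4 ∣ Rf m x - Sf m x := by
  induction m using Nat.strong_induction_on with
  | _ m ih =>
    match m with
    | 0 =>
      intro x
      have hs : Sf 0 x = 1 := by
        simp [Sf, ichoose_zero]
      have hr : Rf 0 x = 1 := by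
        simp [Rf, ichoose_zero]
      rw [hs, hr]; simp
    | 1 =>
      intro x
      have hs : Sf 1 x = x - 1 := by
        simp only [Sf, Finset.sum_range_succ, Finset.sum_range_zero]
        rw [Nat.choose_eq_zero_of_lt (by omega)]
        have : x - ((1:ℕ):ℤ) = x - 1 := by push_cast; ring
        rw [this, ichoose_one]
        simp
      have hr : Rf 1 x = x + 3 := by
        simp only [Rf, if_neg (Nat.one_ne_zero), Nat.sub_self]
        rw [ichoose_one, ichoose_zero]; ring
      rw [hs, hr]
      refine ⟨1, by ring⟩
    | (t + 2) =>
      have ih1 := ih (t + 1) (by omega)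
      have ih0 := ih t (by omega)
      have step : ∀ x : ℤ, (Rf (t+2) x - Sf (t+2) x) - (Rf (t+2) (x-1) - Sf (t+2) (x-1))
          = (Rf (t+1) (x-2) - Sf (t+1) (x-2)) + (Rf t (x-2) - Sf t (x-2)) := by
        intro x
        have h1 := Srec t x
        have h2 := Rrec (t + 1) x
        have h3 := Rrec t (x - 1)
        have e : x - 1 - 1 = x - 2 := by ring
        rw [e] at h3
        linarith
      have base := base_dvd (t + 2)
      have key : ∀ n : ℤ, 4 ∣ Rf (t+2) (((t+2:ℕ):ℤ) + n) - Sf (t+2) (((t+2:ℕ):ℤ) + n) := by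
        intro n
        induction n using Int.induction_on with
        | zero => simpa using base
        | succ k ihk =>
          have hst := step (((t+2:ℕ):ℤ) + (k + 1))
          have e : ((t+2:ℕ):ℤ) + ((k:ℤ) + 1) - 1 = ((t+2:ℕ):ℤ) + (k:ℤ) := by ring
          rw [e] at hst
          have a1 := ih1 (((t+2:ℕ):ℤ) + ((k:ℤ) + 1) - 2)
          have a2 := ih0 (((t+2:ℕ):ℤ) + ((k:ℤ) + 1) - 2)
          omega
        | pred k ihk =>
          have hst := step (((t+2:ℕ):ℤ) + (-(k:ℤ)))
          have e : ((t+2:ℕ):ℤ) + (-(k:ℤ)) - 1 = ((t+2:ℕ):ℤ) + (-(k:ℤ) - 1) := by ring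
          rw [e] at hst
          have a1 := ih1 (((t+2:ℕ):ℤ) + (-(k:ℤ)) - 2)
          have a2 := ih0 (((t+2:ℕ):ℤ) + (-(k:ℤ)) - 2)
          omega
      intro x
      have hx := key (x - ((t+2:ℕ):ℤ))
      have e : ((t+2:ℕ):ℤ) + (x - ((t+2:ℕ):ℤ)) = x := by ring
      rwa [e] at hx

theorem stmt18 (m : ℕ) (x : ℤ) :
    (∑ j ∈ Finset.range (m + 1), (Nat.choose j (m - j) : ℤ) * ichoose (x - j) j)
      ≡ ichoose (x + 1) m + 2 * (if m = 0 then 0 else ichoose (x + 1) (m - 1)) [ZMOD 4] := by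
  have h := main_dvd m x
  exact Int.modEq_iff_dvd.mpr h
end
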